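/- arXiv:1204.1438 — 3 statements merged into one kernel-verified Lean document; each statement's English description precedes it below -/
import Mathlib

section
/- For every n ≥ 2, the Roman bondage number of the 2×n grid satisfies b_R(P_2 × P_n) = 2. -/
open SimpleGraph Finset

/-- A Roman dominating function: values in {0,1,2}, every 0-vertex has a neighbor with value 2. -/
def IsRDF {V : Type*} (G : SimpleGraph V) (f : V → ℕ) : Prop :=
  (∀ v, f v ≤ 2) ∧ ∀ v, f v = 0 → ∃ u, G.Adj v u ∧ f u = 2

/-- The Roman domination number: minimum weight of a Roman dominating function. -/
noncomputable def romanDom {V : Type*} [Fintype V] (G : SimpleGraph V) : ℕ :=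
  sInf {k | ∃ f : V → ℕ, IsRDF G f ∧ ∑ v, f v = k}

/-- A dominating set. -/
def IsDomSet {V : Type*} (G : SimpleGraph V) (S : Set V) : Prop :=
  ∀ v, v ∈ S ∨ ∃ u ∈ S, G.Adj u v

/-- The domination number. -/
noncomputable def domNum {V : Type*} [Fintype V] (G : SimpleGraph V) : ℕ :=
  sInf {k | ∃ S : Set V, IsDomSet G S ∧ S.ncard = k}

/-- Degree of a vertex. -/
noncomputable def deg {V : Type*} (G : SimpleGraph V) (v : V) : ℕ :=
  (G.neighborSet v).ncard

/-- Maximum degree. -/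
noncomputable def maxDeg {V : Type*} (G : SimpleGraph V) : ℕ :=
  sSup {d | ∃ v, deg G v = d}

/-- Minimum degree. -/
noncomputable def minDeg {V : Type*} (G : SimpleGraph V) : ℕ :=
  sInf {d | ∃ v, deg G v = d}

/-- The Roman bondage number: minimum size of an edge set whose deletion increases `romanDom`. -/
noncomputable def romanBondage {V : Type*} [Fintype V] (G : SimpleGraph V) : ℕ :=
  sInf {k | ∃ B : Set (Sym2 V), B ⊆ G.edgeSet ∧
    romanDom (G.deleteEdges B) > romanDom G ∧ B.ncard = k}

/-- The bondage number: minimum size of an edge set whose deletion increases `domNum`. -/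
noncomputable def bondage {V : Type*} [Fintype V] (G : SimpleGraph V) : ℕ :=
  sInf {k | ∃ B : Set (Sym2 V), B ⊆ G.edgeSet ∧
    domNum (G.deleteEdges B) > domNum G ∧ B.ncard = k}

/-- A vertex cover. -/
def IsVC {V : Type*} (G : SimpleGraph V) (S : Set V) : Prop :=
  ∀ u v, G.Adj u v → u ∈ S ∨ v ∈ S

/-- The vertex covering number. -/
noncomputable def vcNum {V : Type*} [Fintype V] (G : SimpleGraph V) : ℕ :=
  sInf {k | ∃ S : Set V, IsVC G S ∧ S.ncard = k}

set_option linter.unreachableTactic false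
set_option linter.unusedTactic false


lemma interval_lb : ∀ (k : ℕ) (x y : ℕ → ℕ) (a b : ℕ), b = a + k →
    (∀ i, a ≤ i → i ≤ b → x i ≤ 2) → (∀ i, a ≤ i → i ≤ b → y i ≤ 2) →
    (∀ i, a ≤ i → i ≤ b → x i = 0 → y i = 2 ∨ (a < i ∧ x (i-1) = 2) ∨ (i < b ∧ x (i+1) = 2)) →
    (∀ i, a ≤ i → i ≤ b → y i = 0 → x i = 2 ∨ (a < i ∧ y (i-1) = 2) ∨ (i < b ∧ y (i+1) = 2)) →
    k + 2 ≤ ∑ i ∈ Finset.Icc a b, (x i + y i) := by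
  intro k
  induction k using Nat.strong_induction_on with
  | _ k IH =>
  intro x y a b hb hx2 hy2 hxd hyd
  rcases Nat.eq_zero_or_pos k with hk | hk
  · have hba : b = a := by omega
    subst hba; subst hk
    simp only [Finset.Icc_self, Finset.sum_singleton]
    by_contra h
    push_neg at h
    rcases Nat.eq_zero_or_pos (x b) with h0 | h0
    · rcases hxd b le_rfl le_rfl h0 with h' | ⟨h',_⟩ | ⟨h',_⟩ <;> omega
    · have hy0 : y b = 0 := by omega
      rcases hyd b le_rfl le_rfl hy0 with h' | ⟨h',_⟩ | ⟨h',_⟩ <;> omega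
  -- k ≥ 1
  have hab : a < b := by omega
  have hsplit : ∑ i ∈ Finset.Icc a b, (x i + y i)
      = ∑ i ∈ Finset.Icc a (b-1), (x i + y i) + (x b + y b) := by
    conv_lhs => rw [show b = (b-1)+1 from by omega]
    rw [Finset.sum_Icc_succ_top (by omega)]
    rw [show b-1+1 = b from by omega]
  by_cases hB : x b = 2 ∨ y b = 2
  · -- case B : some 2 in column b; fix column b-1 and recurse
    have htx2 : 2 * (if x b = 2 ∧ x (b-1) = 0 then 1 else 0) ≤ x b := by
      have := hx2 b (by omega) le_rfl; split_ifs with h <;> omega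
    have hty2 : 2 * (if y b = 2 ∧ y (b-1) = 0 then 1 else 0) ≤ y b := by
      have := hy2 b (by omega) le_rfl; split_ifs with h <;> omega
    let x' : ℕ → ℕ := Function.update x (b-1) (if x b = 2 then max (x (b-1)) 1 else x (b-1))
    let y' : ℕ → ℕ := Function.update y (b-1) (if y b = 2 then max (y (b-1)) 1 else y (b-1))
    have hx'at : x' (b-1) = if x b = 2 then max (x (b-1)) 1 else x (b-1) :=
      Function.update_self _ _ _
    have hy'at : y' (b-1) = if y b = 2 then max (y (b-1)) 1 else y (b-1) :=
      Function.update_self _ _ _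
    have hx'ne : ∀ i, i ≠ b-1 → x' i = x i := fun i h => Function.update_of_ne h _ _
    have hy'ne : ∀ i, i ≠ b-1 → y' i = y i := fun i h => Function.update_of_ne h _ _
    have hx'eq2 : ∀ i, x i = 2 → x' i = 2 := by
      intro i h
      by_cases hi : i = b-1
      · subst hi; rw [hx'at]; split_ifs <;> omega
      · rw [hx'ne i hi]; exact h
    have hy'eq2 : ∀ i, y i = 2 → y' i = 2 := by
      intro i h
      by_cases hi : i = b-1
      · subst hi; rw [hy'at]; split_ifs <;> omega
      · rw [hy'ne i hi]; exact h
    have hx'0 : ∀ i, x' i = 0 → x i = 0 ∧ (i = b-1 → x b ≠ 2) := by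
      intro i h
      by_cases hi : i = b-1
      · subst hi; rw [hx'at] at h; split_ifs at h <;> constructor <;> first | omega | (intro _; omega)
      · rw [hx'ne i hi] at h; exact ⟨h, fun h' => absurd h' hi⟩
    have hy'0 : ∀ i, y' i = 0 → y i = 0 ∧ (i = b-1 → y b ≠ 2) := by
      intro i h
      by_cases hi : i = b-1
      · subst hi; rw [hy'at] at h; split_ifs at h <;> constructor <;> first | omega | (intro _; omega)
      · rw [hy'ne i hi] at h; exact ⟨h, fun h' => absurd h' hi⟩
    have hIH := IH (k-1) (by omega) x' y' a (b-1) (by omega) ?_ ?_ ?_ ?_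
    · -- combine
      have hsum' : ∑ i ∈ Finset.Icc a (b-1), (x' i + y' i)
          ≤ ∑ i ∈ Finset.Icc a (b-1), (x i + y i) +
            ((if x b = 2 ∧ x (b-1) = 0 then 1 else 0) + (if y b = 2 ∧ y (b-1) = 0 then 1 else 0)) := by
        have hpt : ∀ i ∈ Finset.Icc a (b-1),
            x' i + y' i ≤ x i + y i + (if i = b-1 then
              ((if x b = 2 ∧ x (b-1) = 0 then 1 else 0) + (if y b = 2 ∧ y (b-1) = 0 then 1 else 0)) else 0) := by
          intro i hi
          by_cases hib : i = b-1
          · subst hib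
            rw [hx'at, hy'at, if_pos rfl]
            split_ifs <;> omega
          · rw [hx'ne i hib, hy'ne i hib, if_neg hib]; omega
        calc ∑ i ∈ Finset.Icc a (b-1), (x' i + y' i)
            ≤ ∑ i ∈ Finset.Icc a (b-1), (x i + y i + (if i = b-1 then
              ((if x b = 2 ∧ x (b-1) = 0 then 1 else 0) + (if y b = 2 ∧ y (b-1) = 0 then 1 else 0)) else 0)) :=
              Finset.sum_le_sum hpt
          _ = _ := by
              rw [Finset.sum_add_distrib, Finset.sum_ite_eq' (Finset.Icc a (b-1))]
              rw [if_pos (by simp [Finset.mem_Icc]; omega)]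
      have hxyb : 2 ≤ x b + y b := by rcases hB with h | h <;> omega
      omega
    · intro i h1 h2
      by_cases hi : i = b-1
      · subst hi; rw [hx'at]; have := hx2 (b-1) h1 (by omega); split_ifs <;> omega
      · rw [hx'ne i hi]; exact hx2 i h1 (by omega)
    · intro i h1 h2
      by_cases hi : i = b-1
      · subst hi; rw [hy'at]; have := hy2 (b-1) h1 (by omega); split_ifs <;> omega
      · rw [hy'ne i hi]; exact hy2 i h1 (by omega)
    · -- x' domination on [a, b-1]
      intro i h1 h2 h0
      obtain ⟨hx0, hnot⟩ := hx'0 i h0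
      rcases hxd i h1 (by omega) hx0 with h' | ⟨h', h''⟩ | ⟨h', h''⟩
      · exact Or.inl (hy'eq2 i h')
      · exact Or.inr (Or.inl ⟨h', hx'eq2 _ h''⟩)
      · have hlt : i + 1 ≤ b - 1 := by
          rcases Nat.lt_or_ge (i+1) b with h3 | h3
          · omega
          · exfalso
            have hib : i = b - 1 := by omega
            have : x b = 2 := by rw [show b = i + 1 from by omega]; exact h''
            exact hnot hib this
        exact Or.inr (Or.inr ⟨by omega, hx'eq2 _ h''⟩)
    · intro i h1 h2 h0
      obtain ⟨hy0, hnot⟩ := hy'0 i h0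
      rcases hyd i h1 (by omega) hy0 with h' | ⟨h', h''⟩ | ⟨h', h''⟩
      · exact Or.inl (hx'eq2 i h')
      · exact Or.inr (Or.inl ⟨h', hy'eq2 _ h''⟩)
      · have hlt : i + 1 ≤ b - 1 := by
          rcases Nat.lt_or_ge (i+1) b with h3 | h3
          · omega
          · exfalso
            have hib : i = b - 1 := by omega
            have : y b = 2 := by rw [show b = i + 1 from by omega]; exact h''
            exact hnot hib this
        exact Or.inr (Or.inr ⟨by omega, hy'eq2 _ h''⟩)
  · -- case A : x b ≤ 1 and y b ≤ 1
    push_neg at hB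
    have hxb : x b ≤ 1 := by have := hx2 b (by omega) le_rfl; omega
    have hyb : y b ≤ 1 := by have := hy2 b (by omega) le_rfl; omega
    by_cases hA1 : 1 ≤ x b + y b
    · have hIH := IH (k-1) (by omega) x y a (b-1) (by omega)
        (fun i h1 h2 => hx2 i h1 (by omega)) (fun i h1 h2 => hy2 i h1 (by omega)) ?_ ?_
      · omega
      · intro i h1 h2 h0
        rcases hxd i h1 (by omega) h0 with h' | ⟨h', h''⟩ | ⟨h', h''⟩
        · exact Or.inl h'
        · exact Or.inr (Or.inl ⟨h', h''⟩)
        · refine Or.inr (Or.inr ⟨?_, h''⟩)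
          rcases Nat.lt_or_ge (i+1) b with h3 | h3
          · omega
          · have heq : i + 1 = b := by omega
            rw [heq] at h''; omega
      · intro i h1 h2 h0
        rcases hyd i h1 (by omega) h0 with h' | ⟨h', h''⟩ | ⟨h', h''⟩
        · exact Or.inl h'
        · exact Or.inr (Or.inl ⟨h', h''⟩)
        · refine Or.inr (Or.inr ⟨?_, h''⟩)
          rcases Nat.lt_or_ge (i+1) b with h3 | h3
          · omega
          · have heq : i + 1 = b := by omega
            rw [heq] at h''; omega
    · -- x b = y b = 0, forced x (b-1) = y (b-1) = 2
      have hxb0 : x b = 0 := by omega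
      have hyb0 : y b = 0 := by omega
      have hxm : x (b-1) = 2 := by
        rcases hxd b (by omega) le_rfl hxb0 with h' | ⟨_, h''⟩ | ⟨h', _⟩ <;> omega
      have hym : y (b-1) = 2 := by
        rcases hyd b (by omega) le_rfl hyb0 with h' | ⟨_, h''⟩ | ⟨h', _⟩ <;> omega
      rcases Nat.lt_or_ge k 2 with hk2 | hk2
      · have hba : b - 1 = a := by omega
        rw [hsplit, hba, Finset.Icc_self, Finset.sum_singleton]
        rw [hba] at hxm hym; omega
      · -- k ≥ 2 : fix column b-2, recurse on [a, b-2]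
        let x' : ℕ → ℕ := Function.update x (b-2) (max (x (b-2)) 1)
        let y' : ℕ → ℕ := Function.update y (b-2) (max (y (b-2)) 1)
        have hx'at : x' (b-2) = max (x (b-2)) 1 := Function.update_self _ _ _
        have hy'at : y' (b-2) = max (y (b-2)) 1 := Function.update_self _ _ _
        have hx'ne : ∀ i, i ≠ b-2 → x' i = x i := fun i h => Function.update_of_ne h _ _
        have hy'ne : ∀ i, i ≠ b-2 → y' i = y i := fun i h => Function.update_of_ne h _ _
        have hx'eq2 : ∀ i, x i = 2 → x' i = 2 := by
          intro i h
          by_cases hi : i = b-2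
          · subst hi; rw [hx'at]; omega
          · rw [hx'ne i hi]; exact h
        have hy'eq2 : ∀ i, y i = 2 → y' i = 2 := by
          intro i h
          by_cases hi : i = b-2
          · subst hi; rw [hy'at]; omega
          · rw [hy'ne i hi]; exact h
        have hIH := IH (k-2) (by omega) x' y' a (b-2) (by omega) ?_ ?_ ?_ ?_
        · have hsum2 : ∑ i ∈ Finset.Icc a (b-1), (x i + y i)
              = ∑ i ∈ Finset.Icc a (b-2), (x i + y i) + (x (b-1) + y (b-1)) := by
            conv_lhs => rw [show b-1 = (b-2)+1 from by omega]
            rw [Finset.sum_Icc_succ_top (by omega)]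
            rw [show b-2+1 = b-1 from by omega]
          have hsum' : ∑ i ∈ Finset.Icc a (b-2), (x' i + y' i)
              ≤ ∑ i ∈ Finset.Icc a (b-2), (x i + y i) + 2 := by
            have hpt : ∀ i ∈ Finset.Icc a (b-2),
                x' i + y' i ≤ x i + y i + (if i = b-2 then 2 else 0) := by
              intro i hi
              by_cases hib : i = b-2
              · subst hib; rw [hx'at, hy'at, if_pos rfl]; omega
              · rw [hx'ne i hib, hy'ne i hib, if_neg hib]; omega
            calc ∑ i ∈ Finset.Icc a (b-2), (x' i + y' i)
                ≤ ∑ i ∈ Finset.Icc a (b-2), (x i + y i + (if i = b-2 then 2 else 0)) :=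
                  Finset.sum_le_sum hpt
              _ = _ := by
                  rw [Finset.sum_add_distrib, Finset.sum_ite_eq' (Finset.Icc a (b-2))]
                  rw [if_pos (by simp [Finset.mem_Icc]; omega)]
          omega
        · intro i h1 h2
          by_cases hi : i = b-2
          · subst hi; rw [hx'at]; have := hx2 (b-2) h1 (by omega); omega
          · rw [hx'ne i hi]; exact hx2 i h1 (by omega)
        · intro i h1 h2
          by_cases hi : i = b-2
          · subst hi; rw [hy'at]; have := hy2 (b-2) h1 (by omega); omega
          · rw [hy'ne i hi]; exact hy2 i h1 (by omega)
        · intro i h1 h2 h0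
          have hi : i ≠ b-2 := by
            intro hi; subst hi; rw [hx'at] at h0; omega
          rw [hx'ne i hi] at h0
          rcases hxd i h1 (by omega) h0 with h' | ⟨h', h''⟩ | ⟨h', h''⟩
          · exact Or.inl (hy'eq2 i h')
          · exact Or.inr (Or.inl ⟨h', hx'eq2 _ h''⟩)
          · have hlt : i + 1 ≤ b - 2 := by
              rcases Nat.lt_or_ge (i+1) (b-1) with h3 | h3
              · omega
              · exfalso
                rcases Nat.lt_or_ge (i+1) b with h4 | h4
                · have heq : i + 1 = b - 1 := by omega
                  rw [heq] at h''; omega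
                · have heq : i + 1 = b := by omega
                  rw [heq] at h''; omega
            exact Or.inr (Or.inr ⟨by omega, hx'eq2 _ h''⟩)
        · intro i h1 h2 h0
          have hi : i ≠ b-2 := by
            intro hi; subst hi; rw [hy'at] at h0; omega
          rw [hy'ne i hi] at h0
          rcases hyd i h1 (by omega) h0 with h' | ⟨h', h''⟩ | ⟨h', h''⟩
          · exact Or.inl (hx'eq2 i h')
          · exact Or.inr (Or.inl ⟨h', hy'eq2 _ h''⟩)
          · have hlt : i + 1 ≤ b - 2 := by
              rcases Nat.lt_or_ge (i+1) (b-1) with h3 | h3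
              · omega
              · exfalso
                rcases Nat.lt_or_ge (i+1) b with h4 | h4
                · have heq : i + 1 = b - 1 := by omega
                  rw [heq] at h''; omega
                · have heq : i + 1 = b := by omega
                  rw [heq] at h''; omega
            exact Or.inr (Or.inr ⟨by omega, hy'eq2 _ h''⟩)


lemma grid_adj_iff {n : ℕ} (v u : Fin 2 × Fin n) :
    (SimpleGraph.pathGraph 2 □ SimpleGraph.pathGraph n).Adj v u ↔
      (v.1 = u.1 ∧ (v.2.val + 1 = u.2.val ∨ u.2.val + 1 = v.2.val)) ∨
      (v.2 = u.2 ∧ v.1.val ≠ u.1.val) := by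
  rw [SimpleGraph.boxProd_adj, SimpleGraph.pathGraph_adj, SimpleGraph.pathGraph_adj]
  constructor
  · rintro (⟨h1, h2⟩ | ⟨h1, h2⟩)
    · refine Or.inr ⟨h2, ?_⟩
      have := v.1.isLt; have := u.1.isLt; omega
    · exact Or.inl ⟨h2, h1⟩
  · rintro (⟨h1, h2⟩ | ⟨h1, h2⟩)
    · exact Or.inr ⟨h2, h1⟩
    · refine Or.inl ⟨?_, h1⟩
      have := v.1.isLt; have := u.1.isLt; omega

/-- rows of a function on the grid, as functions on ℕ. -/
def rowf {n : ℕ} (r : Fin 2) (f : Fin 2 × Fin n → ℕ) (i : ℕ) : ℕ :=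
  if h : i < n then f (r, ⟨i, h⟩) else 0

lemma interval_lb' : True := trivial

lemma rowf_eq {n : ℕ} (r : Fin 2) (f : Fin 2 × Fin n → ℕ) {i : ℕ} (h : i < n) :
    rowf r f i = f (r, ⟨i, h⟩) := dif_pos h

lemma dom_step {n : ℕ} (f : Fin 2 × Fin n → ℕ) (a b : ℕ) (hbn : b < n)
    (r r' : Fin 2) (hrr : r ≠ r')
    (hdom : ∀ v : Fin 2 × Fin n, a ≤ v.2.val → v.2.val ≤ b → f v = 0 →
      ∃ u, (SimpleGraph.pathGraph 2 □ SimpleGraph.pathGraph n).Adj v u ∧ f u = 2 ∧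
        a ≤ u.2.val ∧ u.2.val ≤ b) :
    ∀ i, a ≤ i → i ≤ b → rowf r f i = 0 →
      rowf r' f i = 2 ∨ (a < i ∧ rowf r f (i-1) = 2) ∨ (i < b ∧ rowf r f (i+1) = 2) := by
  intro i h1 h2 h0
  have hin : i < n := by omega
  rw [rowf_eq _ f hin] at h0
  obtain ⟨u, hadj, hu2, hua, hub⟩ := hdom (r, ⟨i, hin⟩) h1 h2 h0
  rw [grid_adj_iff] at hadj
  rcases hadj with ⟨hr, hc | hc⟩ | ⟨hc, hr⟩
  · -- same row, u in column i+1
    simp only at hr hc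
    refine Or.inr (Or.inr ⟨by omega, ?_⟩)
    rw [rowf_eq _ f (show i + 1 < n by omega)]
    have he : ((r : Fin 2), (⟨i + 1, by omega⟩ : Fin n)) = u := by
      apply Prod.ext
      · exact hr
      · apply Fin.ext; simp; omega
    rw [he]; exact hu2
  · -- same row, u in column i-1
    simp only at hr hc
    refine Or.inr (Or.inl ⟨by omega, ?_⟩)
    rw [rowf_eq _ f (show i - 1 < n by omega)]
    have he : ((r : Fin 2), (⟨i - 1, by omega⟩ : Fin n)) = u := by
      apply Prod.ext
      · exact hr
      · apply Fin.ext; simp; omega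
    rw [he]; exact hu2
  · -- same column, other row
    simp only at hr hc
    refine Or.inl ?_
    rw [rowf_eq _ f hin]
    have he : ((r' : Fin 2), (⟨i, hin⟩ : Fin n)) = u := by
      apply Prod.ext
      · apply Fin.ext
        have h2' := u.1.isLt
        have h3' := r.isLt
        have h4' := r'.isLt
        have h5' : r.val ≠ r'.val := fun h => hrr (Fin.ext h)
        simp only; omega
      · exact hc
    rw [he]; exact hu2

lemma grid_lb {n : ℕ} (f : Fin 2 × Fin n → ℕ) (a b : ℕ) (hab : a ≤ b) (hbn : b < n)
    (hf2 : ∀ v, f v ≤ 2)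
    (hdom : ∀ v : Fin 2 × Fin n, a ≤ v.2.val → v.2.val ≤ b → f v = 0 →
      ∃ u, (SimpleGraph.pathGraph 2 □ SimpleGraph.pathGraph n).Adj v u ∧ f u = 2 ∧
        a ≤ u.2.val ∧ u.2.val ≤ b) :
    (b - a) + 2 ≤ ∑ i ∈ Finset.Icc a b, (rowf 0 f i + rowf 1 f i) := by
  apply interval_lb (b - a) (rowf 0 f) (rowf 1 f) a b (by omega)
  · intro i _ _; unfold rowf; split
    · exact hf2 _
    · omega
  · intro i _ _; unfold rowf; split
    · exact hf2 _
    · omega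
  · exact dom_step f a b hbn 0 1 (by decide) hdom
  · exact dom_step f a b hbn 1 0 (by decide) hdom

lemma sum_rowf {n : ℕ} (hn : 1 ≤ n) (f : Fin 2 × Fin n → ℕ) :
    ∑ i ∈ Finset.Icc 0 (n-1), (rowf 0 f i + rowf 1 f i) = ∑ v, f v := by
  have hIco : Finset.Ico 0 n = Finset.Icc 0 (n-1) := by
    rw [← Finset.Ico_add_one_right_eq_Icc]
    congr 1
    omega
  have hr : ∀ r : Fin 2, ∑ i ∈ Finset.Icc 0 (n-1), rowf r f i = ∑ c : Fin n, f (r, c) := by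
    intro r
    have h1 : ∑ c : Fin n, f (r, c) = ∑ c : Fin n, rowf r f c.val := by
      apply Finset.sum_congr rfl
      intro c _
      rw [rowf_eq r f c.isLt]
    rw [h1, Fin.sum_univ_eq_sum_range, Finset.range_eq_Ico, hIco]
  rw [Fintype.sum_prod_type, Fin.sum_univ_two, Finset.sum_add_distrib, hr 0, hr 1]

/-- row of the 2 placed in column i (for columns of the chosen parity). -/
def rho (σ i : ℕ) : ℕ := (σ + i / 2) % 2

/-- Roman dominating pattern of weight n+1 on the 2×n grid, placing 2's in
columns ≡ π (mod 2), with starting row σ, and 1's at uncovered boundary cells. -/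
def pat (σ π n : ℕ) (v : Fin 2 × Fin n) : ℕ :=
  if v.2.val % 2 = π then (if v.1.val = rho σ v.2.val then 2 else 0)
  else if v.2.val = 0 then (if v.1.val = (σ + 1) % 2 then 1 else 0)
  else if v.2.val = n - 1 then (if v.1.val = (rho σ (n-2) + 1) % 2 then 1 else 0)
  else 0

lemma rho_lt (σ i : ℕ) : rho σ i < 2 := Nat.mod_lt _ (by norm_num)

lemma pat_le (σ π n : ℕ) (v : Fin 2 × Fin n) : pat σ π n v ≤ 2 := by
  unfold pat; split_ifs <;> omega

lemma sum_if_even (π : ℕ) (hπ : π < 2) : ∀ n : ℕ,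
    ∑ j ∈ Finset.range n, (if j % 2 = π then (2:ℕ) else 0)
    = (if π = 0 then n + n % 2 else n - n % 2) := by
  have hc : π = 0 ∨ π = 1 := by omega
  intro n
  induction n with
  | zero => simp
  | succ m ih =>
    rw [Finset.sum_range_succ, ih]
    rcases hc with h | h <;> subst h <;> split_ifs <;> first | contradiction | omega

lemma pat_weight (σ π n : ℕ) (hσ : σ < 2) (hπ : π < 2) (hn : 2 ≤ n) :
    ∑ v, pat σ π n v = n + 1 := by
  have hcol : ∀ c : Fin n, pat σ π n (0, c) + pat σ π n (1, c) =
      (if c.val % 2 = π then (2:ℕ) else 0) +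
      ((if c.val = 0 then (if π = 1 then 1 else 0) else 0) +
       (if c.val = n-1 then (if (n-1) % 2 = π ∨ n-1 = 0 then 0 else 1) else 0)) := by
    intro c
    have h1 := rho_lt σ c.val
    have h2 : (σ + 1) % 2 < 2 := Nat.mod_lt _ (by norm_num)
    have h3 : (rho σ (n-2) + 1) % 2 < 2 := Nat.mod_lt _ (by norm_num)
    simp only [pat, Fin.val_zero, Fin.val_one]
    split_ifs <;> omega
  calc ∑ v, pat σ π n v = ∑ c : Fin n, (pat σ π n (0, c) + pat σ π n (1, c)) := by
        rw [Fintype.sum_prod_type, Fin.sum_univ_two, ← Finset.sum_add_distrib]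
    _ = ∑ c : Fin n, ((if (c:ℕ) % 2 = π then (2:ℕ) else 0) +
      ((if (c:ℕ) = 0 then (if π = 1 then 1 else 0) else 0) +
       (if (c:ℕ) = n-1 then (if (n-1) % 2 = π ∨ n-1 = 0 then 0 else 1) else 0))) :=
        Finset.sum_congr rfl (fun c _ => hcol c)
    _ = n + 1 := by
        rw [Fin.sum_univ_eq_sum_range (fun j => (if j % 2 = π then (2:ℕ) else 0) +
          ((if j = 0 then (if π = 1 then 1 else 0) else 0) +
           (if j = n-1 then (if (n-1) % 2 = π ∨ n-1 = 0 then 0 else 1) else 0)))]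
        rw [Finset.sum_add_distrib, Finset.sum_add_distrib]
        rw [Finset.sum_ite_eq' (Finset.range n) 0, Finset.sum_ite_eq' (Finset.range n) (n-1)]
        rw [if_pos (Finset.mem_range.2 (by omega)), if_pos (Finset.mem_range.2 (by omega))]
        rw [sum_if_even π hπ]
        split_ifs <;> omega

lemma pat_two {σ π n : ℕ} {j : ℕ} (hj : j < n) (hpar : j % 2 = π) (r : Fin 2)
    (hr : r.val = rho σ j) : pat σ π n (r, ⟨j, hj⟩) = 2 := by
  unfold pat
  simp only
  rw [if_pos hpar, if_pos hr]

lemma pat_rdf (σ π n : ℕ) (hσ : σ < 2) (hπ : π < 2) (hn : 2 ≤ n)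
    (B : Set (Sym2 (Fin 2 × Fin n)))
    (hBv : ∀ (i : ℕ) (hi : i < n), i % 2 = π → ∀ r r' : Fin 2,
      s((r, (⟨i, hi⟩ : Fin n)), (r', ⟨i, hi⟩)) ∉ B)
    (hBh : ∀ (i j : ℕ) (hi : i < n) (hj : j < n) (r : Fin 2), i % 2 = π →
      r.val = rho σ i → s((r, (⟨i, hi⟩ : Fin n)), (r, ⟨j, hj⟩)) ∉ B) :
    IsRDF ((SimpleGraph.pathGraph 2 □ SimpleGraph.pathGraph n).deleteEdges B) (pat σ π n) := by
  constructor
  · exact pat_le σ π n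
  intro v h0
  obtain ⟨r, c⟩ := v
  have hrlt := r.isLt
  have hclt := c.isLt
  have hceq : c = ⟨c.val, hclt⟩ := rfl
  by_cases hpar : c.val % 2 = π
  · -- vertical domination from the 2 in the same column
    have hr0 : ¬ r.val = rho σ c.val := by
      intro h; rw [pat_two hclt hpar r h] at h0; omega
    refine ⟨(⟨rho σ c.val, rho_lt σ c.val⟩, c), ?_, ?_⟩
    · rw [SimpleGraph.deleteEdges_adj]
      constructor
      · rw [grid_adj_iff]
        exact Or.inr ⟨rfl, hr0⟩
      · exact hBv c.val hclt hpar r _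
    · exact pat_two hclt hpar _ rfl
  · -- horizontal domination
    have hpat0 : pat σ π n (r, c) = 0 := h0
    by_cases hi0 : c.val = 0
    · -- column 0, π = 1, r is the row covered by the 2 at column 1
      have hπ1 : π = 1 := by omega
      have h1n : 1 < n := by omega
      have hr1 : r.val = rho σ 1 := by
        have : ¬ r.val = (σ + 1) % 2 := by
          intro h
          unfold pat at h0
          rw [if_neg hpar, if_pos hi0, if_pos h] at h0
          omega
        have e1 : rho σ 1 = (σ + 1/2) % 2 := rfl
        have e2 : (σ + 1) % 2 < 2 := Nat.mod_lt _ (by norm_num)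
        omega
      refine ⟨(r, ⟨1, h1n⟩), ?_, ?_⟩
      · rw [SimpleGraph.deleteEdges_adj]
        constructor
        · rw [grid_adj_iff]
          exact Or.inl ⟨rfl, Or.inl (by simp; omega)⟩
        · rw [show c = ⟨0, by omega⟩ from Fin.ext hi0, Sym2.eq_swap]
          exact hBh 1 0 h1n (by omega) r (by omega) hr1
      · exact pat_two h1n (by omega) r hr1
    by_cases hin1 : c.val = n - 1
    · -- last column, covered from column n-2
      have hn2 : n - 2 < n := by omega
      have hpar2 : (n-2) % 2 = π := by omega
      have hr1 : r.val = rho σ (n-2) := by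
        have hne : ¬ r.val = (rho σ (n-2) + 1) % 2 := by
          intro h
          unfold pat at h0
          rw [if_neg hpar, if_neg hi0, if_pos hin1, if_pos h] at h0
          omega
        have e2 := rho_lt σ (n-2)
        omega
      refine ⟨(r, ⟨n-2, hn2⟩), ?_, ?_⟩
      · rw [SimpleGraph.deleteEdges_adj]
        constructor
        · rw [grid_adj_iff]
          refine Or.inl ⟨rfl, Or.inr (by simp; omega)⟩
        · rw [show c = ⟨n-1, by omega⟩ from Fin.ext hin1, Sym2.eq_swap]
          exact hBh (n-2) (n-1) hn2 (by omega) r hpar2 hr1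
      · exact pat_two hn2 hpar2 r hr1
    · -- interior column of the wrong parity
      have hi1 : 1 ≤ c.val := by omega
      have hisuc : c.val + 1 < n := by omega
      have hparl : (c.val - 1) % 2 = π := by omega
      have hparr : (c.val + 1) % 2 = π := by omega
      by_cases hleft : r.val = rho σ (c.val - 1)
      · refine ⟨(r, ⟨c.val - 1, by omega⟩), ?_, ?_⟩
        · rw [SimpleGraph.deleteEdges_adj]
          constructor
          · rw [grid_adj_iff]
            exact Or.inl ⟨rfl, Or.inr (by simp; omega)⟩
          · rw [Sym2.eq_swap]
            exact hBh (c.val - 1) c.val (by omega) hclt r hparl hleft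
        · exact pat_two (by omega) hparl r hleft
      · have hright : r.val = rho σ (c.val + 1) := by
          have e1 : rho σ (c.val - 1) = (σ + (c.val - 1)/2) % 2 := rfl
          have e2 : rho σ (c.val + 1) = (σ + (c.val + 1)/2) % 2 := rfl
          omega
        refine ⟨(r, ⟨c.val + 1, hisuc⟩), ?_, ?_⟩
        · rw [SimpleGraph.deleteEdges_adj]
          constructor
          · rw [grid_adj_iff]
            exact Or.inl ⟨rfl, Or.inl (by simp)⟩
          · rw [Sym2.eq_swap]
            exact hBh (c.val + 1) c.val hisuc hclt r hparr hright
        · exact pat_two hisuc hparr r hright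

lemma const_one_rdf {V : Type*} (G : SimpleGraph V) : IsRDF G (fun _ => 1) :=
  ⟨fun _ => one_le_two, fun _ h => absurd h one_ne_zero⟩

lemma romanDom_le {V : Type*} [Fintype V] (G : SimpleGraph V) (f : V → ℕ)
    (h : IsRDF G f) : romanDom G ≤ ∑ v, f v :=
  Nat.sInf_le ⟨f, h, rfl⟩

lemma romanDom_ge {V : Type*} [Fintype V] (G : SimpleGraph V) (m : ℕ)
    (h : ∀ f, IsRDF G f → m ≤ ∑ v, f v) : m ≤ romanDom G := by
  obtain ⟨f, hf, hsum⟩ :=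
    Nat.sInf_mem (⟨∑ v : V, (1:ℕ), fun _ => 1, const_one_rdf G, rfl⟩ :
      Set.Nonempty {k | ∃ f : V → ℕ, IsRDF G f ∧ ∑ v, f v = k})
  rw [romanDom, ← hsum]
  exact h f hf

/-- Any RDF of any edge-deleted subgraph of the 2×n grid has weight ≥ n+1. -/
lemma grid_del_lb (n : ℕ) (hn : 2 ≤ n) (B : Set (Sym2 (Fin 2 × Fin n)))
    (f : Fin 2 × Fin n → ℕ)
    (h : IsRDF ((SimpleGraph.pathGraph 2 □ SimpleGraph.pathGraph n).deleteEdges B) f) :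
    n + 1 ≤ ∑ v, f v := by
  have hlb := grid_lb f 0 (n-1) (by omega) (by omega) h.1 ?_
  · rw [sum_rowf (by omega) f] at hlb
    omega
  · intro v _ _ h0
    obtain ⟨u, hadj, hu⟩ := h.2 v h0
    exact ⟨u, ((SimpleGraph.deleteEdges_adj).1 hadj).1, hu, by omega,
      by have := u.2.isLt; omega⟩

lemma romanDom_grid (n : ℕ) (hn : 2 ≤ n) :
    romanDom (SimpleGraph.pathGraph 2 □ SimpleGraph.pathGraph n) = n + 1 := by
  apply le_antisymm
  · have hrdf := pat_rdf 0 0 n (by norm_num) (by norm_num) hn ∅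
      (fun _ _ _ _ _ => Set.notMem_empty _) (fun _ _ _ _ _ _ _ => Set.notMem_empty _)
    rw [SimpleGraph.deleteEdges_empty] at hrdf
    have := romanDom_le _ _ hrdf
    rwa [pat_weight 0 0 n (by norm_num) (by norm_num) hn] at this
  · apply romanDom_ge
    intro f hf
    apply grid_del_lb n hn ∅
    rwa [SimpleGraph.deleteEdges_empty]

/-- Deleting one edge does not raise the Roman domination number of the 2×n grid. -/
lemma grid_one_edge (n : ℕ) (hn : 2 ≤ n) (e : Sym2 (Fin 2 × Fin n))
    (he : e ∈ (SimpleGraph.pathGraph 2 □ SimpleGraph.pathGraph n).edgeSet) :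
    romanDom ((SimpleGraph.pathGraph 2 □ SimpleGraph.pathGraph n).deleteEdges {e}) ≤ n + 1 := by
  induction e using Sym2.ind with
  | _ u v =>
  rw [SimpleGraph.mem_edgeSet, grid_adj_iff] at he
  rcases he with ⟨hrow, hcol⟩ | ⟨hcol, hrow⟩
  · -- horizontal edge: same row, adjacent columns
    set j : ℕ := min u.2.val v.2.val with hj
    have hcols : (u.2.val = j ∧ v.2.val = j + 1) ∨ (v.2.val = j ∧ u.2.val = j + 1) := by omega
    set σ' : ℕ := (u.1.val + 1 + j / 2) % 2 with hσ'
    have hσ'lt : σ' < 2 := Nat.mod_lt _ (by norm_num)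
    have hπlt : j % 2 < 2 := Nat.mod_lt _ (by norm_num)
    have hkey : rho σ' j ≠ u.1.val := by
      have e1 : rho σ' j = (σ' + j / 2) % 2 := rfl
      omega
    have hrdf := pat_rdf σ' (j % 2) n hσ'lt hπlt hn {s(u, v)} ?_ ?_
    · have := romanDom_le _ _ hrdf
      rwa [pat_weight σ' (j % 2) n hσ'lt hπlt hn] at this
    · -- vertical witness edges are not the horizontal edge e
      intro i hi hpar r r' hmem
      simp only [Set.mem_singleton_iff, Sym2.eq_iff, Prod.ext_iff, Fin.ext_iff] at hmem
      omega
    · -- horizontal witness edges avoid e by the choice of σ'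
      intro i j' hi hj' r hpar hr hmem
      simp only [Set.mem_singleton_iff, Sym2.eq_iff, Prod.ext_iff, Fin.ext_iff] at hmem
      have hrowv : u.1.val = v.1.val := by rw [hrow]
      have hij : i = j := by omega
      rw [hij] at hr
      omega
  · -- vertical edge: same column, different rows
    set π' : ℕ := 1 - u.2.val % 2 with hπ'
    have hπlt : π' < 2 := by omega
    have hrdf := pat_rdf 0 π' n (by norm_num) hπlt hn {s(u, v)} ?_ ?_
    · have := romanDom_le _ _ hrdf
      rwa [pat_weight 0 π' n (by norm_num) hπlt hn] at this
    · -- vertical witness at column of parity π' ≠ parity of u's column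
      intro i hi hpar r r' hmem
      simp only [Set.mem_singleton_iff, Sym2.eq_iff, Prod.ext_iff, Fin.ext_iff] at hmem
      have hcolv : u.2.val = v.2.val := by rw [hcol]
      omega
    · -- horizontal witness edges have equal rows, e has distinct rows
      intro i j' hi hj' r hpar hr hmem
      simp only [Set.mem_singleton_iff, Sym2.eq_iff, Prod.ext_iff, Fin.ext_iff] at hmem
      omega

/-- Deleting the two horizontal edges between columns 0 and 1 forces weight ≥ n+2. -/
lemma grid_two_edge (n : ℕ) (hn : 2 ≤ n) :
    n + 2 ≤ romanDom ((SimpleGraph.pathGraph 2 □ SimpleGraph.pathGraph n).deleteEdges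
      {s(((0:Fin 2), (⟨0, by omega⟩ : Fin n)), ((0:Fin 2), (⟨1, by omega⟩ : Fin n))),
       s(((1:Fin 2), (⟨0, by omega⟩ : Fin n)), ((1:Fin 2), (⟨1, by omega⟩ : Fin n)))}) := by
  set B : Set (Sym2 (Fin 2 × Fin n)) :=
    {s(((0:Fin 2), (⟨0, by omega⟩ : Fin n)), ((0:Fin 2), (⟨1, by omega⟩ : Fin n))),
     s(((1:Fin 2), (⟨0, by omega⟩ : Fin n)), ((1:Fin 2), (⟨1, by omega⟩ : Fin n)))} with hB
  have hmemB : ∀ r : Fin 2, s((r, (⟨0, by omega⟩ : Fin n)), (r, (⟨1, by omega⟩ : Fin n))) ∈ B := by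
    intro r
    by_cases h : r.val = 0
    · rw [show r = 0 from Fin.ext h]
      exact Set.mem_insert _ _
    · rw [show r = 1 from Fin.ext (by have := r.isLt; omega)]
      exact Set.mem_insert_of_mem _ rfl
  apply romanDom_ge
  intro f hf
  have hL := grid_lb f 0 0 le_rfl (by omega) hf.1 ?_
  have hR := grid_lb f 1 (n-1) (by omega) (by omega) hf.1 ?_
  · -- combine the two interval bounds
    have hIco1 : Finset.Ico 0 1 = Finset.Icc 0 0 := by
      rw [← Finset.Ico_add_one_right_eq_Icc]
      rfl
    have hIco2 : Finset.Ico 1 n = Finset.Icc 1 (n-1) := by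
      rw [← Finset.Ico_add_one_right_eq_Icc]
      congr 1
      omega
    have hIco3 : Finset.Ico 0 n = Finset.Icc 0 (n-1) := by
      rw [← Finset.Ico_add_one_right_eq_Icc]
      congr 1
      omega
    have hsum := Finset.sum_Ico_consecutive (fun i => rowf 0 f i + rowf 1 f i)
      (show (0:ℕ) ≤ 1 by omega) (show (1:ℕ) ≤ n by omega)
    rw [hIco1, hIco2, hIco3, sum_rowf (by omega) f] at hsum
    beta_reduce at hsum
    omega
  · -- right interval [1, n-1] is self-dominated
    intro v hv1 hv2 h0
    obtain ⟨u, hadj, hu2⟩ := hf.2 v h0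
    obtain ⟨v1, v2⟩ := v
    obtain ⟨u1, u2⟩ := u
    simp only at hv1 hv2 ⊢
    rw [SimpleGraph.deleteEdges_adj] at hadj
    obtain ⟨hGadj, hnB⟩ := hadj
    refine ⟨(u1, u2), hGadj, hu2, ?_, by show u2.val ≤ n - 1; have := u2.isLt; omega⟩
    show 1 ≤ u2.val
    by_contra hc
    have hu0 : u2.val = 0 := by omega
    rw [grid_adj_iff] at hGadj
    simp only at hGadj
    rcases hGadj with ⟨hrow, hcol⟩ | ⟨hcol, hrow⟩
    · have hv21 : v2.val = 1 := by omega
      apply hnB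
      rw [show v2 = (⟨1, by omega⟩ : Fin n) from Fin.ext hv21,
        show u2 = (⟨0, by omega⟩ : Fin n) from Fin.ext hu0, hrow, Sym2.eq_swap]
      exact hmemB u1
    · have : v2.val = 0 := by rw [hcol]; exact hu0
      omega
  · -- left interval [0, 0] is self-dominated
    intro v hv1 hv2 h0
    obtain ⟨u, hadj, hu2⟩ := hf.2 v h0
    obtain ⟨v1, v2⟩ := v
    obtain ⟨u1, u2⟩ := u
    simp only at hv1 hv2 ⊢
    rw [SimpleGraph.deleteEdges_adj] at hadj
    obtain ⟨hGadj, hnB⟩ := hadj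
    refine ⟨(u1, u2), hGadj, hu2, by show 0 ≤ u2.val; omega, ?_⟩
    show u2.val ≤ 0
    by_contra hc
    have hu1 : 1 ≤ u2.val := by omega
    rw [grid_adj_iff] at hGadj
    simp only at hGadj
    rcases hGadj with ⟨hrow, hcol⟩ | ⟨hcol, hrow⟩
    · have hu21 : u2.val = 1 := by omega
      apply hnB
      rw [show v2 = (⟨0, by omega⟩ : Fin n) from Fin.ext (show v2.val = 0 by omega),
        show u2 = (⟨1, by omega⟩ : Fin n) from Fin.ext hu21, hrow]
      exact hmemB u1
    · have : u2.val = v2.val := by rw [hcol]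
      omega


theorem stmt17 (n : ℕ) (hn : 2 ≤ n) :
    romanBondage (SimpleGraph.pathGraph 2 □ SimpleGraph.pathGraph n) = 2 := by
  have hG := romanDom_grid n hn
  set G := SimpleGraph.pathGraph 2 □ SimpleGraph.pathGraph n with hGdef
  set B2 : Set (Sym2 (Fin 2 × Fin n)) :=
    {s(((0:Fin 2), (⟨0, by omega⟩ : Fin n)), ((0:Fin 2), (⟨1, by omega⟩ : Fin n))),
     s(((1:Fin 2), (⟨0, by omega⟩ : Fin n)), ((1:Fin 2), (⟨1, by omega⟩ : Fin n)))} with hB2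
  have hsub : B2 ⊆ G.edgeSet := by
    intro x hx
    rcases hx with hx | hx
    · rw [hx, SimpleGraph.mem_edgeSet, grid_adj_iff]
      exact Or.inl ⟨rfl, Or.inl rfl⟩
    · rw [Set.mem_singleton_iff] at hx
      rw [hx, SimpleGraph.mem_edgeSet, grid_adj_iff]
      exact Or.inl ⟨rfl, Or.inl rfl⟩
  have hcard : B2.ncard = 2 := by
    apply Set.ncard_pair
    intro h
    simp only [Sym2.eq_iff, Prod.ext_iff, Fin.ext_iff, Fin.val_zero, Fin.val_one] at h
    omega
  have h2T : 2 ∈ {k | ∃ B : Set (Sym2 (Fin 2 × Fin n)), B ⊆ G.edgeSet ∧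
      romanDom (G.deleteEdges B) > romanDom G ∧ B.ncard = k} := by
    refine ⟨B2, hsub, ?_, hcard⟩
    rw [hG]
    have h22 := grid_two_edge n hn
    rw [← hGdef] at h22
    rw [← hB2] at h22
    omega
  rw [romanBondage]
  apply le_antisymm (Nat.sInf_le h2T)
  obtain ⟨B, hBsub, hBgt, hBcard⟩ := Nat.sInf_mem (⟨2, h2T⟩ : Set.Nonempty _)
  by_contra hlt
  push_neg at hlt
  have hfin : B.Finite := Set.toFinite B
  have : B.ncard = 0 ∨ B.ncard = 1 := by omega
  rcases this with h0 | h1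
  · rw [(Set.ncard_eq_zero hfin).1 h0, SimpleGraph.deleteEdges_empty] at hBgt
    exact absurd hBgt (lt_irrefl _)
  · obtain ⟨e, he⟩ := Set.ncard_eq_one.1 h1
    subst he
    have he' : e ∈ G.edgeSet := hBsub rfl
    have hub := grid_one_edge n hn e he'
    rw [← hGdef] at hub
    rw [hG] at hBgt
    omega
end

section
/- If G is a connected graph of order n ≥ 4 with γ_R(G) = 3, then b_R(G) ≤ Δ(G) = n − 2. -/
open SimpleGraph Finset

/-- every low-weight RDF yields a vertex of degree ≥ n-2 -/
lemma rdf_struct {V : Type*} [Fintype V] (H : SimpleGraph V) (hn : 4 ≤ Fintype.card V)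
    (f : V → ℕ) (hf : IsRDF H f) (hw : ∑ v, f v ≤ 3) :
    ∃ v, Fintype.card V - 2 ≤ deg H v := by
  classical
  -- there is a vertex with value 2
  have h2 : ∃ v, f v = 2 := by
    by_contra h
    push_neg at h
    have h1 : ∀ v, f v = 1 := by
      intro v
      rcases Nat.lt_or_ge (f v) 1 with hv | hv
      · obtain ⟨u, _, hu2⟩ := hf.2 v (Nat.lt_one_iff.mp hv)
        exact absurd hu2 (h u)
      · have h2 := hf.1 v
        have h3 := h v
        omega
    have : ∑ v, f v = Fintype.card V := by
      simp [h1, Finset.card_univ]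
    omega
  obtain ⟨v, hv2⟩ := h2
  -- the set of nonzero vertices has at most 2 elements
  have key : ∀ u, u ≠ v → f u = 0 ∨ (∀ w, w ≠ v → w ≠ u → f w = 0) := by
    intro u hu
    by_cases hfu : f u = 0
    · exact Or.inl hfu
    · refine Or.inr fun w hwv hwu => ?_
      by_contra hfw
      have hsub : ({v, u, w} : Finset V) ⊆ univ := subset_univ _
      have hsum : ∑ x ∈ ({v, u, w} : Finset V), f x ≤ ∑ x, f x :=
        Finset.sum_le_sum_of_subset hsub
      rw [Finset.sum_insert (by simp [hu.symm, hwv.symm]),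
        Finset.sum_insert (by simp [hwu.symm]), Finset.sum_singleton] at hsum
      omega
  -- zeros are neighbors of v
  have hzero_adj : ∀ w, f w = 0 → H.Adj v w := by
    intro w hw
    obtain ⟨x, hadj, hx2⟩ := hf.2 w hw
    have hxv : x = v := by
      by_contra hxv
      have hsub : ({v, x} : Finset V) ⊆ univ := subset_univ _
      have hsum : ∑ y ∈ ({v, x} : Finset V), f y ≤ ∑ y, f y :=
        Finset.sum_le_sum_of_subset hsub
      rw [Finset.sum_pair (fun h => hxv h.symm)] at hsum
      omega
    exact (hxv ▸ hadj).symm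
  -- count zeros
  refine ⟨v, ?_⟩
  by_cases hall : ∀ u, u ≠ v → f u = 0
  · have hsub : ({v}ᶜ : Set V) ⊆ H.neighborSet v := by
      intro w hw
      exact hzero_adj w (hall w hw)
    have hle := Set.ncard_le_ncard hsub (Set.toFinite _)
    have hcompl : ({v} : Set V).ncard + ({v}ᶜ : Set V).ncard = Fintype.card V := by
      rw [Set.ncard_add_ncard_compl, Nat.card_eq_fintype_card]
    rw [Set.ncard_singleton] at hcompl
    unfold deg
    omega
  · push_neg at hall
    obtain ⟨u, huv, hfu⟩ := hall
    have hrest : ∀ w, w ≠ v → w ≠ u → f w = 0 := by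
      rcases key u huv with h | h
      · exact absurd h hfu
      · exact h
    have hsub : (({v} : Set V) ∪ {u})ᶜ ⊆ H.neighborSet v := by
      intro w hw
      simp only [Set.mem_compl_iff, Set.mem_union, Set.mem_singleton_iff, not_or] at hw
      exact hzero_adj w (hrest w hw.1 hw.2)
    have hle := Set.ncard_le_ncard hsub (Set.toFinite _)
    have hcompl : (({v} : Set V) ∪ {u}).ncard + ((({v} : Set V) ∪ {u})ᶜ).ncard
        = Fintype.card V := by
      rw [Set.ncard_add_ncard_compl, Nat.card_eq_fintype_card]
    have hcard2 : (({v} : Set V) ∪ {u}).ncard ≤ 2 := by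
      refine le_trans (Set.ncard_union_le _ _) ?_
      simp [Set.ncard_singleton]
    unfold deg
    omega

theorem stmt18 {V : Type*} [Fintype V] (G : SimpleGraph V)
    (hconn : G.Connected) (hn : 4 ≤ Fintype.card V)
    (hγ : romanDom G = 3) :
    romanBondage G ≤ maxDeg G ∧ maxDeg G = Fintype.card V - 2 := by
  classical
  set n := Fintype.card V with hndef
  -- every RDF of G has weight ≥ 3
  have hlow : ∀ (f : V → ℕ), IsRDF G f → 3 ≤ ∑ v, f v := by
    intro f hf
    have h : romanDom G ≤ ∑ v, f v := Nat.sInf_le ⟨f, hf, rfl⟩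
    omega
  -- complement of a singleton has ncard n - 1
  have hcompl1 : ∀ w : V, ({w}ᶜ : Set V).ncard = n - 1 := by
    intro w
    have h := Set.ncard_add_ncard_compl ({w} : Set V) (Set.toFinite _) (Set.toFinite _)
    rw [Nat.card_eq_fintype_card, Set.ncard_singleton] at h
    omega
  have hnsub : ∀ (H : SimpleGraph V) (w : V), H.neighborSet w ⊆ ({w}ᶜ : Set V) := by
    intro H w x hx
    exact Set.mem_compl_singleton_iff.mpr (H.adj_symm hx).ne
  have hdeg_le : ∀ (H : SimpleGraph V) (w : V), deg H w ≤ n - 1 := by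
    intro H w
    have h := Set.ncard_le_ncard (hnsub H w) (Set.toFinite _)
    rw [hcompl1 w] at h
    exact h
  -- no vertex has degree n - 1
  have hdlt : ∀ w, deg G w ≤ n - 2 := by
    intro w
    by_contra hcon
    push_neg at hcon
    have h1 := hdeg_le G w
    have hdeq : (G.neighborSet w).ncard = n - 1 := by
      simp only [deg] at hcon h1; omega
    have hset : G.neighborSet w = ({w}ᶜ : Set V) := by
      refine Set.eq_of_subset_of_ncard_le (hnsub G w) ?_ (Set.toFinite _)
      rw [hdeq, hcompl1 w]
    set g : V → ℕ := fun x => if x = w then 2 else 0 with hgdef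
    have hg : IsRDF G g := by
      constructor
      · intro x; by_cases h : x = w <;> simp [hgdef, h]
      · intro x hx
        have hxw : x ≠ w := by
          intro h; rw [h] at hx; simp [hgdef] at hx
        refine ⟨w, ?_, by simp [hgdef]⟩
        have : x ∈ G.neighborSet w := by rw [hset]; exact hxw
        exact ((G.mem_neighborSet w x).mp this).symm
    have hsum : ∑ x, g x = 2 := by
      simp [hgdef, Finset.sum_ite_eq']
    have := hlow g hg
    omega
  -- a vertex of degree exactly n - 2
  obtain ⟨f3, hf3, hw3⟩ : ∃ f : V → ℕ, IsRDF G f ∧ ∑ v, f v = 3 := by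
    have hne : {k | ∃ f : V → ℕ, IsRDF G f ∧ ∑ v, f v = k}.Nonempty :=
      ⟨∑ v : V, 1, fun _ => 1, ⟨fun _ => one_le_two, fun v h => absurd h one_ne_zero⟩, rfl⟩
    have h : romanDom G ∈ {k | ∃ f : V → ℕ, IsRDF G f ∧ ∑ v, f v = k} := Nat.sInf_mem hne
    rw [hγ] at h
    exact h
  obtain ⟨v, hvge⟩ := rdf_struct G hn f3 hf3 (le_of_eq hw3)
  have hvdeg : deg G v = n - 2 := le_antisymm (hdlt v) hvge
  -- maxDeg = n - 2
  have hmax : maxDeg G = n - 2 := by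
    apply le_antisymm
    · refine csSup_le ⟨n - 2, v, hvdeg⟩ ?_
      rintro d ⟨w, rfl⟩
      exact hdlt w
    · refine le_csSup ⟨n - 2, ?_⟩ ⟨v, hvdeg⟩
      rintro d ⟨w, rfl⟩
      exact hdlt w
  -- the unique non-neighbor u of v
  have hdiff1 : (({v}ᶜ : Set V) \ G.neighborSet v).ncard = 1 := by
    rw [Set.ncard_diff (hnsub G v) (Set.toFinite _), hcompl1 v]
    have : (G.neighborSet v).ncard = n - 2 := hvdeg
    omega
  obtain ⟨u, hu⟩ := Set.ncard_eq_one.mp hdiff1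
  have humem : u ∈ ({v}ᶜ : Set V) \ G.neighborSet v := by rw [hu]; exact rfl
  have huv : u ≠ v := humem.1
  have hnadj : ¬ G.Adj v u := humem.2
  have hadjv : ∀ w, w ≠ v → w ≠ u → G.Adj v w := by
    intro w hwv hwu
    by_contra h
    have hmem : w ∈ ({v}ᶜ : Set V) \ G.neighborSet v := ⟨hwv, h⟩
    rw [hu] at hmem
    exact hwu (Set.mem_singleton_iff.mp hmem)
  -- v has a neighbor
  have hvpos : (G.neighborSet v).Nonempty := by
    refine (Set.ncard_pos (Set.toFinite _)).mp ?_
    have : (G.neighborSet v).ncard = n - 2 := hvdeg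
    omega
  -- construct the edge set B
  have hBex : ∃ B : Set (Sym2 V), B ⊆ G.edgeSet ∧ B.ncard ≤ n - 2 ∧
      ∀ w, deg G w = n - 2 → ∃ x, G.Adj w x ∧ s(w, x) ∈ B := by
    by_cases hu2 : deg G u = n - 2
    · -- u also has degree n - 2; it is adjacent to everything except v
      have hadju : ∀ w, w ≠ u → w ≠ v → G.Adj u w := by
        have hsubu : G.neighborSet u ⊆ (({u}ᶜ : Set V) \ {v}) := by
          intro x hx
          refine ⟨Set.mem_compl_singleton_iff.mpr (G.adj_symm hx).ne, ?_⟩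
          simp only [Set.mem_singleton_iff]
          rintro rfl
          exact hnadj (G.adj_symm hx)
        have heq : G.neighborSet u = (({u}ᶜ : Set V) \ {v}) := by
          refine Set.eq_of_subset_of_ncard_le hsubu ?_ (Set.toFinite _)
          rw [Set.ncard_diff (Set.singleton_subset_iff.mpr (Set.mem_compl_singleton_iff.mpr huv.symm)) (Set.toFinite _), hcompl1 u,
            Set.ncard_singleton]
          have : (G.neighborSet u).ncard = n - 2 := hu2
          omega
        intro w hwu hwv
        have : w ∈ G.neighborSet u := by
          rw [heq]; exact ⟨hwu, hwv⟩
        exact (G.mem_neighborSet u w).mp this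
      obtain ⟨a, ha⟩ := hvpos
      have hav : a ≠ v := (G.adj_symm ha).ne
      have hau : a ≠ u := by
        rintro rfl; exact hnadj ha
      have hpos2 : ((G.neighborSet v) \ {a}).Nonempty := by
        refine (Set.ncard_pos (Set.toFinite _)).mp ?_
        rw [Set.ncard_diff_singleton_of_mem ha]
        have : (G.neighborSet v).ncard = n - 2 := hvdeg
        omega
      obtain ⟨b, hb⟩ := hpos2
      refine ⟨(fun w => s(v, w)) '' ((G.neighborSet v) \ {a}) ∪ {s(u, a)}, ?_, ?_, ?_⟩
      · rintro e (⟨w, hw, rfl⟩ | he)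
        · exact G.mem_edgeSet.mpr hw.1
        · rw [Set.mem_singleton_iff] at he
          rw [he]
          exact G.mem_edgeSet.mpr (hadju a hau hav)
      · refine le_trans (Set.ncard_union_le _ _) ?_
        have h1 : ((fun w => s(v, w)) '' ((G.neighborSet v) \ {a})).ncard
            ≤ ((G.neighborSet v) \ {a}).ncard := Set.ncard_image_le (Set.toFinite _)
        have h2 : ((G.neighborSet v) \ {a}).ncard = n - 3 := by
          rw [Set.ncard_diff_singleton_of_mem ha]
          have : (G.neighborSet v).ncard = n - 2 := hvdeg
          omega
        rw [Set.ncard_singleton]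
        omega
      · intro w hw
        by_cases hwv : w = v
        · rw [hwv]
          exact ⟨b, (G.mem_neighborSet v b).mp hb.1, Or.inl ⟨b, hb, rfl⟩⟩
        by_cases hwu : w = u
        · rw [hwu]
          exact ⟨a, hadju a hau hav, Or.inr rfl⟩
        by_cases hwa : w = a
        · rw [hwa]
          refine ⟨u, (hadju a hau hav).symm, Or.inr ?_⟩
          rw [Set.mem_singleton_iff, Sym2.eq_swap]
        · refine ⟨v, (hadjv w hwv hwu).symm, Or.inl ⟨w, ⟨hadjv w hwv hwu, hwa⟩, ?_⟩⟩
          rw [Sym2.eq_swap]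
    · -- u does not have degree n - 2
      obtain ⟨w0, hw0⟩ := hvpos
      have hTsub : insert w0 ({w | deg G w = n - 2} \ {v, u}) ⊆ G.neighborSet v := by
        rintro w (rfl | ⟨hwD, hwvu⟩)
        · exact hw0
        · simp only [Set.mem_insert_iff, Set.mem_singleton_iff, not_or] at hwvu
          exact hadjv w hwvu.1 hwvu.2
      refine ⟨(fun w => s(v, w)) '' (insert w0 ({w | deg G w = n - 2} \ {v, u})), ?_, ?_, ?_⟩
      · rintro e ⟨w, hw, rfl⟩
        exact G.mem_edgeSet.mpr (hTsub hw)
      · refine le_trans (Set.ncard_image_le (Set.toFinite _)) ?_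
        have h := Set.ncard_le_ncard hTsub (Set.toFinite _)
        have : (G.neighborSet v).ncard = n - 2 := hvdeg
        omega
      · intro w hw
        by_cases hwv : w = v
        · rw [hwv]
          exact ⟨w0, (G.mem_neighborSet v w0).mp hw0, ⟨w0, Set.mem_insert _ _, rfl⟩⟩
        · have hwu : w ≠ u := by
            rintro rfl; exact hu2 hw
          have hwT : w ∈ insert w0 ({x | deg G x = n - 2} \ {v, u}) :=
            Set.mem_insert_iff.mpr (Or.inr ⟨hw, by simp [hwv, hwu]⟩)
          refine ⟨v, (hadjv w hwv hwu).symm, ⟨w, hwT, ?_⟩⟩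
          rw [Sym2.eq_swap]
  obtain ⟨B, hBsub, hBcard, hBcov⟩ := hBex
  -- after deletion, all degrees are ≤ n - 3
  have hdeg' : ∀ w, deg (G.deleteEdges B) w ≤ n - 3 := by
    intro w
    have hmono : (G.deleteEdges B).neighborSet w ⊆ G.neighborSet w := by
      intro x hx
      exact (SimpleGraph.deleteEdges_adj.mp hx).1
    by_cases hw : deg G w = n - 2
    · obtain ⟨x, hadj, hxB⟩ := hBcov w hw
      have hsub2 : (G.deleteEdges B).neighborSet w ⊆ G.neighborSet w \ {x} := by
        intro y hy
        have h1 := SimpleGraph.deleteEdges_adj.mp hy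
        refine ⟨h1.1, ?_⟩
        simp only [Set.mem_singleton_iff]
        rintro rfl
        exact h1.2 hxB
      have h2 := Set.ncard_le_ncard hsub2 (Set.toFinite _)
      rw [Set.ncard_diff_singleton_of_mem ((G.mem_neighborSet w x).mpr hadj)]
        at h2
      have h3 : (G.neighborSet w).ncard = n - 2 := hw
      simp only [deg]
      omega
    · have h1 := Set.ncard_le_ncard hmono (Set.toFinite _)
      have h2 := hdlt w
      simp only [deg] at h2 hw ⊢
      omega
  -- hence romanDom of the deleted graph is ≥ 4
  have hge4 : 4 ≤ romanDom (G.deleteEdges B) := by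
    have hne' : {k | ∃ f : V → ℕ, IsRDF (G.deleteEdges B) f ∧ ∑ v, f v = k}.Nonempty :=
      ⟨∑ v : V, 1, fun _ => 1, ⟨fun _ => one_le_two, fun v h => absurd h one_ne_zero⟩, rfl⟩
    have hmem : romanDom (G.deleteEdges B) ∈
        {k | ∃ f : V → ℕ, IsRDF (G.deleteEdges B) f ∧ ∑ v, f v = k} := Nat.sInf_mem hne'
    obtain ⟨g, hg, hgsum⟩ := hmem
    by_contra hcon
    push_neg at hcon
    obtain ⟨x, hx⟩ := rdf_struct (G.deleteEdges B) hn g hg (by omega)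
    have := hdeg' x
    omega
  refine ⟨?_, hmax⟩
  have hble : romanBondage G ≤ B.ncard := by
    refine Nat.sInf_le ⟨B, hBsub, ?_, rfl⟩
    rw [hγ]
    omega
  rw [hmax]
  omega
end

section
/- Let G be a connected graph of order n ≥ 4 with γ_R(G) = 3. Then b_R(G) = Δ(G) = n − 2 if and only if G is isomorphic to the cycle C_4. -/
open SimpleGraph Finset

section AuxRB
set_option linter.unusedSectionVars false
variable {V : Type*} [Fintype V] [DecidableEq V]

lemma deg_eq_degree (G : SimpleGraph V) [DecidableRel G.Adj] (v : V) :
    deg G v = G.degree v := by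
  rw [deg, degree, neighborFinset_def, Set.ncard_eq_toFinset_card']

lemma deg_le (G : SimpleGraph V) (v : V) : deg G v ≤ Fintype.card V - 1 := by
  classical
  rw [deg_eq_degree]
  have := G.degree_lt_card_verts v
  omega

/-- the always-one function is an RDF, so the romanDom set is nonempty -/
lemma romanDom_set_nonempty (G : SimpleGraph V) :
    {k | ∃ f : V → ℕ, IsRDF G f ∧ ∑ v, f v = k}.Nonempty := by
  exact ⟨_, (fun _ => 1), ⟨fun v => one_le_two, fun v h => by simp at h⟩, rfl⟩

lemma romanDom_le_sum (G : SimpleGraph V) {f : V → ℕ} (hf : IsRDF G f) :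
    romanDom G ≤ ∑ v, f v := Nat.sInf_le ⟨f, hf, rfl⟩

lemma exists_rdf_eq_romanDom (G : SimpleGraph V) :
    ∃ f : V → ℕ, IsRDF G f ∧ ∑ v, f v = romanDom G :=
  Nat.sInf_mem (romanDom_set_nonempty G)

/-- Lemma 4: a vertex of degree ≥ n-2 gives romanDom ≤ 3. -/
lemma romanDom_le_three (G : SimpleGraph V) {v : V}
    (hv : Fintype.card V - 2 ≤ deg G v) (hn : 2 ≤ Fintype.card V) :
    romanDom G ≤ 3 := by
  classical
  set f : V → ℕ := fun u => if u = v then 2 else if G.Adj v u then 0 else 1 with hf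
  have hrdf : IsRDF G f := by
    constructor
    · intro u
      simp only [hf]
      split <;> [omega; split <;> omega]
    · intro u hu
      refine ⟨v, ?_, by simp [hf]⟩
      simp only [hf] at hu
      by_contra hadj
      rcases eq_or_ne u v with rfl | hne
      · simp at hu
      · rw [if_neg hne, if_neg (fun h => hadj h.symm)] at hu
        simp at hu
  refine le_trans (romanDom_le_sum G hrdf) ?_
  have hsum : ∑ u, f u = 2 + ((univ.erase v).filter (fun u => ¬ G.Adj v u)).card := by
    rw [← Finset.sum_erase_add _ _ (mem_univ v)]
    simp only [hf, if_pos rfl]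
    rw [add_comm]
    congr 1
    rw [Finset.sum_congr rfl (fun u hu => by
      rw [if_neg (Finset.ne_of_mem_erase hu)]), Finset.sum_ite, Finset.sum_const,
      Finset.sum_const]
    simp
  rw [hsum]
  have h1 : ((univ.erase v).filter (fun u => ¬ G.Adj v u)).card
      = (Fintype.card V - 1) - G.degree v := by
    have : (univ.erase v).filter (fun u => G.Adj v u) = G.neighborFinset v := by
      ext u
      simp only [Finset.mem_filter, Finset.mem_erase, mem_univ, and_true, true_and,
        mem_neighborFinset]
      exact ⟨fun h => h.2, fun h => ⟨h.ne', h⟩⟩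
    have hsplit := Finset.card_filter_add_card_filter_not
      (s := univ.erase v) (p := fun u => G.Adj v u)
    rw [this] at hsplit
    have : (univ.erase v).card = Fintype.card V - 1 := by simp
    rw [degree]
    omega
  rw [deg_eq_degree] at hv
  omega

/-- Lemma 5: romanDom ≤ 3 with n ≥ 4 forces a vertex of degree ≥ n-2. -/
lemma exists_bigDeg_of_romanDom_le_three (G : SimpleGraph V)
    (hn : 4 ≤ Fintype.card V) (h3 : romanDom G ≤ 3) :
    ∃ v, Fintype.card V - 2 ≤ deg G v := by
  classical
  obtain ⟨f, ⟨hb, hz⟩, hsum⟩ := exists_rdf_eq_romanDom G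
  rw [← hsum] at h3
  -- there is a vertex with f v = 2
  have h2 : ∃ v, f v = 2 := by
    by_contra h
    push_neg at h
    have h1 : ∀ v, 1 ≤ f v := by
      intro v
      rcases Nat.eq_zero_or_pos (f v) with h0 | h0
      · obtain ⟨u, _, hu2⟩ := hz v h0
        exact absurd hu2 (h u)
      · omega
    have : Fintype.card V ≤ ∑ v, f v := by
      calc Fintype.card V = ∑ _v : V, 1 := by simp
        _ ≤ ∑ v, f v := Finset.sum_le_sum (fun v _ => h1 v)
    omega
  obtain ⟨v, hv2⟩ := h2
  refine ⟨v, ?_⟩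
  -- at most one vertex other than v has nonzero f
  have honez : ∀ w u, w ≠ v → u ≠ v → w ≠ u → f w ≠ 0 → f u ≠ 0 → False := by
    intro w u hwv huv hwu hw hu
    have : 4 ≤ ∑ x, f x := by
      have hsub : ({v, w, u} : Finset V) ⊆ univ := subset_univ _
      have : ∑ x ∈ ({v, w, u} : Finset V), f x ≤ ∑ x, f x :=
        Finset.sum_le_sum_of_subset hsub
      rw [Finset.sum_insert (by simp [hwv.symm, huv.symm]),
        Finset.sum_insert (by simp [hwu])] at this
      simp only [Finset.sum_singleton] at this
      omega
    omega
  -- every zero vertex is adjacent to v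
  have hadj : ∀ z, f z = 0 → G.Adj v z := by
    intro z hz0
    obtain ⟨u, hzu, hu2⟩ := hz z hz0
    have huv : u = v := by
      by_contra hne
      have hle : ∑ x ∈ ({v, u} : Finset V), f x ≤ ∑ x, f x :=
        Finset.sum_le_sum_of_subset (subset_univ _)
      rw [Finset.sum_insert (by simp [Ne.symm hne])] at hle
      simp only [Finset.sum_singleton] at hle
      omega
    rw [huv] at hzu
    exact hzu.symm
  -- Z := zeros; card Z ≥ n - 2
  set Z := univ.filter (fun z => f z = 0) with hZ
  have hZsub : Z ⊆ G.neighborFinset v := by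
    intro z hzz
    rw [mem_neighborFinset]
    exact hadj z (by simpa [hZ] using hzz)
  have hcardZ : Fintype.card V - 2 ≤ Z.card := by
    -- complement of Z has at most 2 elements: v and possibly one other
    set T := univ.filter (fun z => f z ≠ 0) with hT
    have hTcard : T.card ≤ 2 := by
      by_contra hc
      push_neg at hc
      obtain ⟨a, ha, b, hb, c, hc', hab, hac, hbc⟩ := Finset.two_lt_card.mp hc
      simp only [hT, Finset.mem_filter] at ha hb hc'
      -- among a b c at least two differ from v
      rcases eq_or_ne a v with hav | hav
      · exact honez b c (fun h => hab (hav.trans h.symm)) (fun h => hac (hav.trans h.symm))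
          hbc hb.2 hc'.2
      · rcases eq_or_ne b v with hbv | hbv
        · exact honez a c hav (fun h => hbc (hbv.trans h.symm)) hac ha.2 hc'.2
        · exact honez a b hav hbv hab ha.2 hb.2
    have : Z.card + T.card = Fintype.card V := by
      rw [hZ, hT]
      simpa using Finset.card_filter_add_card_filter_not
        (s := univ) (p := fun z => f z = 0)
    omega
  have := Finset.card_le_card hZsub
  rw [deg_eq_degree, degree]
  omega

/-- F1: if romanDom G = 3 then no vertex is adjacent to all others. -/
lemma deg_le_sub_two_of_romanDom_eq_three (G : SimpleGraph V)
    (hn : 4 ≤ Fintype.card V) (hγ : romanDom G = 3) (v : V) :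
    deg G v ≤ Fintype.card V - 2 := by
  classical
  have hle := deg_le G v
  by_contra hc
  push_neg at hc
  have hdeg : deg G v = Fintype.card V - 1 := by omega
  -- v is adjacent to every other vertex
  have hadj : ∀ u, u ≠ v → G.Adj v u := by
    intro u huv
    by_contra hnadj
    have hsub : G.neighborFinset v ⊆ (univ.erase v).erase u := by
      intro w hw
      rw [mem_neighborFinset] at hw
      refine Finset.mem_erase.mpr ⟨fun h => hnadj (h ▸ hw), Finset.mem_erase.mpr
        ⟨hw.ne', mem_univ w⟩⟩
    have hcard := Finset.card_le_card hsub
    have h1 : ((univ.erase v).erase u).card ≤ Fintype.card V - 2 := by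
      rw [Finset.card_erase_of_mem (Finset.mem_erase.mpr ⟨huv, mem_univ u⟩),
        Finset.card_erase_of_mem (mem_univ v), Finset.card_univ]
      omega
    rw [deg_eq_degree, degree] at hdeg
    omega
  -- then f = 2 at v, 0 elsewhere is an RDF of weight 2
  set f : V → ℕ := fun u => if u = v then 2 else 0 with hf
  have hrdf : IsRDF G f := by
    refine ⟨fun u => by simp only [hf]; split <;> omega, fun u hu => ?_⟩
    have huv : u ≠ v := by
      intro h; simp [hf, h] at hu
    exact ⟨v, (hadj u huv).symm, by simp [hf]⟩
  have hsum : ∑ u, f u = 2 := by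
    simp [hf, Finset.sum_ite_eq']
  have := romanDom_le_sum G hrdf
  omega

lemma deleteEdges_deg_le (G : SimpleGraph V) (B : Set (Sym2 V)) (v : V) :
    deg (G.deleteEdges B) v ≤ deg G v := by
  apply Set.ncard_le_ncard _ (Set.toFinite _)
  intro u hu
  exact (SimpleGraph.deleteEdges_adj.mp hu).1

lemma deleteEdges_deg_lt (G : SimpleGraph V) (B : Set (Sym2 V)) {v u : V}
    (hadj : G.Adj v u) (hB : s(v, u) ∈ B) :
    deg (G.deleteEdges B) v < deg G v := by
  apply Set.ncard_lt_ncard _ (Set.toFinite _)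
  constructor
  · intro w hw
    exact (SimpleGraph.deleteEdges_adj.mp hw).1
  · intro hsub
    have hu : u ∈ (G.deleteEdges B).neighborSet v := hsub hadj
    rw [SimpleGraph.mem_neighborSet, SimpleGraph.deleteEdges_adj] at hu
    exact hu.2 hB

lemma deleteEdges_deg_eq (G : SimpleGraph V) (B : Set (Sym2 V)) {v : V}
    (h : ∀ u, G.Adj v u → s(v, u) ∉ B) :
    deg (G.deleteEdges B) v = deg G v := by
  unfold deg
  congr 1
  ext u
  simp only [SimpleGraph.mem_neighborSet, SimpleGraph.deleteEdges_adj]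
  exact ⟨fun h' => h'.1, fun h' => ⟨h', h u h'⟩⟩

/-- Lemma 7 forward: a "cover" of all max-degree vertices increases romanDom above 3. -/
lemma romanDom_deleteEdges_gt (G : SimpleGraph V)
    (hn : 4 ≤ Fintype.card V) (hγ : romanDom G = 3) (B : Set (Sym2 V))
    (hcov : ∀ v, deg G v = Fintype.card V - 2 → ∃ u, G.Adj v u ∧ s(v, u) ∈ B) :
    3 < romanDom (G.deleteEdges B) := by
  by_contra hc
  push_neg at hc
  obtain ⟨v, hv⟩ := exists_bigDeg_of_romanDom_le_three (G.deleteEdges B) hn hc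
  have h1 := deleteEdges_deg_le G B v
  have h2 := deg_le_sub_two_of_romanDom_eq_three G hn hγ v
  have hdeg : deg G v = Fintype.card V - 2 := by omega
  obtain ⟨u, hadj, hB⟩ := hcov v hdeg
  have := deleteEdges_deg_lt G B hadj hB
  omega

/-- Lemma 7 backward. -/
lemma cover_of_romanDom_deleteEdges_gt (G : SimpleGraph V)
    (hn : 4 ≤ Fintype.card V) (B : Set (Sym2 V))
    (hgt : 3 < romanDom (G.deleteEdges B))
    {v : V} (hdeg : deg G v = Fintype.card V - 2) :
    ∃ u, G.Adj v u ∧ s(v, u) ∈ B := by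
  by_contra hc
  push_neg at hc
  have heq : deg (G.deleteEdges B) v = deg G v :=
    deleteEdges_deg_eq G B (fun u h hB => hc u h hB)
  have h3 : romanDom (G.deleteEdges B) ≤ 3 :=
    romanDom_le_three (G.deleteEdges B) (v := v) (by omega) (by omega)
  omega

/-- Membership form: an explicit finite cover bounds the Roman bondage number. -/
lemma romanBondage_le (G : SimpleGraph V)
    (hn : 4 ≤ Fintype.card V) (hγ : romanDom G = 3) (B : Finset (Sym2 V))
    (hBE : ↑B ⊆ G.edgeSet)
    (hcov : ∀ v, deg G v = Fintype.card V - 2 → ∃ u, G.Adj v u ∧ s(v, u) ∈ B) :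
    romanBondage G ≤ B.card := by
  apply Nat.sInf_le
  refine ⟨↑B, hBE, ?_, Set.ncard_coe_finset B⟩
  rw [hγ]
  exact romanDom_deleteEdges_gt G hn hγ ↑B (by simpa using hcov)

/-- Uniqueness of non-neighbor. -/
def uniqNonAdj {V : Type*} (G : SimpleGraph V) (v : V) : Prop :=
  ∀ a b, a ≠ v → b ≠ v → ¬G.Adj v a → ¬G.Adj v b → a = b

lemma uniqNonAdj_of_deg (G : SimpleGraph V) {v : V}
    (hdeg : deg G v = Fintype.card V - 2) (hn : 4 ≤ Fintype.card V) :
    uniqNonAdj G v := by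
  classical
  intro a b hav hbv hna hnb
  by_contra hab
  have hsub : G.neighborFinset v ⊆ ((univ.erase v).erase a).erase b := by
    intro w hw
    rw [mem_neighborFinset] at hw
    refine Finset.mem_erase.mpr ⟨fun h => hnb (h ▸ hw), Finset.mem_erase.mpr
      ⟨fun h => hna (h ▸ hw), Finset.mem_erase.mpr ⟨hw.ne', mem_univ w⟩⟩⟩
  have hcard := Finset.card_le_card hsub
  rw [Finset.card_erase_of_mem (Finset.mem_erase.mpr ⟨Ne.symm hab, Finset.mem_erase.mpr ⟨hbv, mem_univ b⟩⟩)] at hcard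
  rw [Finset.card_erase_of_mem (Finset.mem_erase.mpr ⟨hav, mem_univ a⟩),
    Finset.card_erase_of_mem (mem_univ v), Finset.card_univ] at hcard
  rw [deg_eq_degree, degree] at hdeg
  omega

lemma adj_or_of_uniqNonAdj (G : SimpleGraph V) {v a b : V} (h : uniqNonAdj G v)
    (hav : a ≠ v) (hbv : b ≠ v) (hab : a ≠ b) : G.Adj v a ∨ G.Adj v b := by
  by_contra hc
  push_neg at hc
  exact hab (h a b hav hbv hc.1 hc.2)

/-- 4-matching lemma: among 4 distinct vertices each with a unique non-neighbor,
there are two disjoint adjacent pairs covering all four. -/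
lemma matching_four (G : SimpleGraph V) {a b c d : V}
    (hUa : uniqNonAdj G a) (hUb : uniqNonAdj G b) (hUc : uniqNonAdj G c)
    (hUd : uniqNonAdj G d)
    (hab : a ≠ b) (hac : a ≠ c) (had : a ≠ d) (hbc : b ≠ c) (hbd : b ≠ d)
    (hcd : c ≠ d) :
    ∃ p q r t, G.Adj p q ∧ G.Adj r t ∧
      ∀ z, (z = a ∨ z = b ∨ z = c ∨ z = d) → (z = p ∨ z = q ∨ z = r ∨ z = t) := by
  by_cases h1 : G.Adj a b
  · by_cases h2 : G.Adj c d
    · exact ⟨a, b, c, d, h1, h2, fun z h => h⟩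
    · have hca : G.Adj c a :=
        (adj_or_of_uniqNonAdj G hUc hac (Ne.symm hcd) had).resolve_right h2
      have hdb : G.Adj d b :=
        (adj_or_of_uniqNonAdj G hUd hbd hcd hbc).resolve_right
          (fun h => h2 h.symm)
      exact ⟨c, a, d, b, hca, hdb, fun z h => by tauto⟩
  · have hac' : G.Adj a c :=
      (adj_or_of_uniqNonAdj G hUa (Ne.symm hac) (Ne.symm hab) (Ne.symm hbc)).resolve_right h1
    have hbd' : G.Adj b d :=
      (adj_or_of_uniqNonAdj G hUb (Ne.symm hbd) hab (Ne.symm had)).resolve_right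
        (fun h => h1 h.symm)
    exact ⟨a, c, b, d, hac', hbd', fun z h => by tauto⟩

lemma exists_four_distinct (T : Finset V) (h : 4 ≤ T.card) :
    ∃ a ∈ T, ∃ b ∈ T, ∃ c ∈ T, ∃ d ∈ T,
      a ≠ b ∧ a ≠ c ∧ a ≠ d ∧ b ≠ c ∧ b ≠ d ∧ c ≠ d := by
  obtain ⟨a, ha⟩ := (Finset.card_pos (s := T)).mp (by omega)
  have h1 : 3 ≤ (T.erase a).card := by rw [Finset.card_erase_of_mem ha]; omega
  obtain ⟨b, hb, c, hc, d, hd, hbc, hbd, hcd⟩ := (Finset.two_lt_card (s := T.erase a)).mp (by omega)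
  obtain ⟨hba, hb'⟩ := Finset.mem_erase.mp hb
  obtain ⟨hca, hc'⟩ := Finset.mem_erase.mp hc
  obtain ⟨hda, hd'⟩ := Finset.mem_erase.mp hd
  exact ⟨a, ha, b, hb', c, hc', d, hd', Ne.symm hba, Ne.symm hca,
    Ne.symm hda, hbc, hbd, hcd⟩

/-- the set of vertices of degree n-2 -/
noncomputable def bigDegSet (G : SimpleGraph V) : Finset V :=
  univ.filter (fun v => deg G v = Fintype.card V - 2)

lemma mem_bigDegSet {G : SimpleGraph V} {v : V} :
    v ∈ bigDegSet G ↔ deg G v = Fintype.card V - 2 := by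
  simp [bigDegSet]

lemma romanBondage_le_general (G : SimpleGraph V)
    (hn : 4 ≤ Fintype.card V) (hγ : romanDom G = 3)
    (E0 : Finset (Sym2 V)) (P : Finset V)
    (hE0 : ↑E0 ⊆ G.edgeSet) (hP : P ⊆ bigDegSet G)
    (hinc : ∀ p ∈ P, ∃ u, G.Adj p u ∧ s(p, u) ∈ E0) :
    romanBondage G ≤ E0.card + (bigDegSet G \ P).card := by
  classical
  have hpick : ∀ v : V, ∃ u, v ∈ bigDegSet G → G.Adj v u := by
    intro v
    by_cases hv : v ∈ bigDegSet G
    · have hdeg : deg G v = Fintype.card V - 2 := mem_bigDegSet.mp hv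
      have hne : (G.neighborSet v).Nonempty := by
        apply Set.nonempty_of_ncard_ne_zero
        rw [deg] at hdeg
        omega
      obtain ⟨u, hu⟩ := hne
      exact ⟨u, fun _ => hu⟩
    · exact ⟨v, fun h => absurd h hv⟩
  choose g hg using hpick
  set B : Finset (Sym2 V) := E0 ∪ (bigDegSet G \ P).image (fun v => s(v, g v)) with hB
  have hBE : ↑B ⊆ G.edgeSet := by
    intro e he
    rw [hB] at he
    simp only [Finset.coe_union, Set.mem_union, Finset.coe_image, Set.mem_image,
      Finset.mem_coe] at he
    rcases he with he | ⟨v, hv, rfl⟩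
    · exact hE0 he
    · rw [mem_edgeSet]
      exact hg v (Finset.mem_sdiff.mp hv).1
  have hcov : ∀ v, deg G v = Fintype.card V - 2 → ∃ u, G.Adj v u ∧ s(v, u) ∈ B := by
    intro v hv
    have hvS : v ∈ bigDegSet G := mem_bigDegSet.mpr hv
    by_cases hvP : v ∈ P
    · obtain ⟨u, hu, he⟩ := hinc v hvP
      exact ⟨u, hu, Finset.mem_union_left _ he⟩
    · refine ⟨g v, hg v hvS, Finset.mem_union_right _ ?_⟩
      exact Finset.mem_image_of_mem _ (Finset.mem_sdiff.mpr ⟨hvS, hvP⟩)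
  calc romanBondage G ≤ B.card := romanBondage_le G hn hγ B hBE hcov
    _ ≤ E0.card + ((bigDegSet G \ P).image (fun v => s(v, g v))).card :=
        Finset.card_union_le _ _
    _ ≤ E0.card + (bigDegSet G \ P).card := by
        gcongr
        exact Finset.card_image_le

lemma inc_of_pairs {G : SimpleGraph V} {p q r t z : V} (hpq : G.Adj p q) (hrt : G.Adj r t)
    (hz : z = p ∨ z = q ∨ z = r ∨ z = t) (E0 : Finset (Sym2 V))
    (h1 : s(p, q) ∈ E0) (h2 : s(r, t) ∈ E0) : ∃ u, G.Adj z u ∧ s(z, u) ∈ E0 := by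
  rcases hz with rfl | rfl | rfl | rfl
  · exact ⟨q, hpq, h1⟩
  · exact ⟨p, hpq.symm, by rwa [Sym2.eq_swap]⟩
  · exact ⟨t, hrt, h2⟩
  · exact ⟨r, hrt.symm, by rwa [Sym2.eq_swap]⟩

lemma romanBondage_le_card_sub_three (G : SimpleGraph V)
    (hn5 : 5 ≤ Fintype.card V) (hγ : romanDom G = 3) :
    romanBondage G ≤ Fintype.card V - 3 := by
  classical
  have hn4 : 4 ≤ Fintype.card V := by omega
  set n := Fintype.card V with hn
  set S := bigDegSet G with hS
  have hUN : ∀ v ∈ S, uniqNonAdj G v := fun v hv =>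
    uniqNonAdj_of_deg G (mem_bigDegSet.mp hv) hn4
  have hSle : S.card ≤ n := by
    rw [hn, ← Finset.card_univ]
    exact Finset.card_le_card (subset_univ _)
  rcases le_or_gt S.card (n - 3) with hle | hgt
  · have h := romanBondage_le_general G hn4 hγ ∅ ∅ (by simp) (by simp) (by simp)
    simp only [Finset.card_empty, Finset.sdiff_empty, zero_add] at h
    exact le_trans h hle
  · have h3 : 3 ≤ S.card := by omega
    obtain ⟨x, hx, y', hy', z', hz', hxy', hxz', hyz'⟩ :=
      (Finset.two_lt_card (s := S)).mp (by omega)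
    have hpair : ∃ y ∈ S, y ≠ x ∧ G.Adj x y := by
      rcases adj_or_of_uniqNonAdj G (hUN x hx) (Ne.symm hxy') (Ne.symm hxz') hyz'
        with h | h
      · exact ⟨y', hy', Ne.symm hxy', h⟩
      · exact ⟨z', hz', Ne.symm hxz', h⟩
    obtain ⟨y, hy, hyx, hxy⟩ := hpair
    have hsub : S.card = n - 2 ∨ S.card = n - 1 ∨ S.card = n := by omega
    rcases hsub with h | h | h
    · -- |S| = n - 2 : one internal edge suffices
      have hP : ({x, y} : Finset V) ⊆ S := by
        intro p hp
        rcases Finset.mem_insert.mp hp with rfl | hp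
        · exact hx
        · rw [Finset.mem_singleton.mp hp]; exact hy
      have hb := romanBondage_le_general G hn4 hγ {s(x, y)} {x, y}
        (by intro e he; simp only [Finset.coe_singleton, Set.mem_singleton_iff] at he
            rw [he, mem_edgeSet]; exact hxy)
        hP
        (fun p hp => by
          rcases Finset.mem_insert.mp hp with rfl | hp
          · exact ⟨y, hxy, Finset.mem_singleton_self _⟩
          · rw [Finset.mem_singleton.mp hp]
            exact ⟨x, hxy.symm, by rw [Sym2.eq_swap]; exact Finset.mem_singleton_self _⟩)
      rw [← hS] at hb
      have hcards : (S \ {x, y}).card = S.card - 2 := by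
        rw [Finset.card_sdiff_of_subset hP, Finset.card_pair (Ne.symm hyx)]
      rw [Finset.card_singleton] at hb
      omega
    · -- |S| = n - 1 : two disjoint internal edges
      obtain ⟨a, ha, b, hb', c, hc, d, hd, hab, hac, had, hbc, hbd, hcd⟩ :=
        exists_four_distinct S (by omega)
      obtain ⟨p, q, r, t, hpq, hrt, hcover⟩ :=
        matching_four G (hUN a ha) (hUN b hb') (hUN c hc) (hUN d hd)
          hab hac had hbc hbd hcd
      have hP : ({a, b, c, d} : Finset V) ⊆ S := by
        intro p' hp'
        simp only [Finset.mem_insert, Finset.mem_singleton] at hp'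
        rcases hp' with rfl | rfl | rfl | rfl <;> assumption
      have hPcard : ({a, b, c, d} : Finset V).card = 4 := by
        rw [Finset.card_insert_of_notMem (by simp [hab, hac, had]),
          Finset.card_insert_of_notMem (by simp [hbc, hbd]), Finset.card_pair hcd]
      have hb2 := romanBondage_le_general G hn4 hγ {s(p, q), s(r, t)} {a, b, c, d}
        (by intro e he
            simp only [Finset.coe_insert, Set.mem_insert_iff, Finset.coe_singleton,
              Set.mem_singleton_iff] at he
            rcases he with rfl | rfl
            · exact hpq
            · exact hrt)
        hP
        (fun p' hp' => by
          have hz : p' = a ∨ p' = b ∨ p' = c ∨ p' = d := by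
            simpa [Finset.mem_insert, Finset.mem_singleton] using hp'
          exact inc_of_pairs hpq hrt (hcover p' hz) _ (by simp) (by simp))
      rw [← hS] at hb2
      have hcards : (S \ ({a, b, c, d} : Finset V)).card = S.card - 4 := by
        rw [Finset.card_sdiff_of_subset hP, hPcard]
      have hE0card : ({s(p, q), s(r, t)} : Finset (Sym2 V)).card ≤ 2 :=
        le_trans (Finset.card_insert_le _ _) (by simp)
      omega
    · -- |S| = n : S = univ
      by_cases h5 : n = 5
      · -- parity contradiction
        exfalso
        have hSuniv : S = univ := Finset.eq_univ_of_card S (by rw [h, hn])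
        have hdeg3 : ∀ v : V, G.degree v = 3 := by
          intro v
          have hv : v ∈ S := hSuniv ▸ mem_univ v
          have := mem_bigDegSet.mp hv
          rw [deg_eq_degree] at this
          omega
        have hhs := G.sum_degrees_eq_twice_card_edges
        rw [Finset.sum_congr rfl (fun v _ => hdeg3 v), Finset.sum_const, Finset.card_univ,
          smul_eq_mul] at hhs
        omega
      · -- n ≥ 6 : three disjoint internal edges
        have hn6 : 6 ≤ n := by omega
        have hT : 4 ≤ ((S.erase x).erase y).card := by
          rw [Finset.card_erase_of_mem (Finset.mem_erase.mpr ⟨hyx, hy⟩),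
            Finset.card_erase_of_mem hx]
          omega
        obtain ⟨a, ha, b, hb', c, hc, d, hd, hab, hac, had, hbc, hbd, hcd⟩ :=
          exists_four_distinct _ hT
        obtain ⟨hay, hax, haS⟩ : a ≠ y ∧ a ≠ x ∧ a ∈ S := by
          obtain ⟨h1, h2⟩ := Finset.mem_erase.mp ha
          obtain ⟨h3, h4⟩ := Finset.mem_erase.mp h2
          exact ⟨h1, h3, h4⟩
        obtain ⟨hby, hbx, hbS⟩ : b ≠ y ∧ b ≠ x ∧ b ∈ S := by
          obtain ⟨h1, h2⟩ := Finset.mem_erase.mp hb'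
          obtain ⟨h3, h4⟩ := Finset.mem_erase.mp h2
          exact ⟨h1, h3, h4⟩
        obtain ⟨hcy, hcx, hcS⟩ : c ≠ y ∧ c ≠ x ∧ c ∈ S := by
          obtain ⟨h1, h2⟩ := Finset.mem_erase.mp hc
          obtain ⟨h3, h4⟩ := Finset.mem_erase.mp h2
          exact ⟨h1, h3, h4⟩
        obtain ⟨hdy, hdx, hdS⟩ : d ≠ y ∧ d ≠ x ∧ d ∈ S := by
          obtain ⟨h1, h2⟩ := Finset.mem_erase.mp hd
          obtain ⟨h3, h4⟩ := Finset.mem_erase.mp h2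
          exact ⟨h1, h3, h4⟩
        obtain ⟨p, q, r, t, hpq, hrt, hcover⟩ :=
          matching_four G (hUN a haS) (hUN b hbS) (hUN c hcS) (hUN d hdS)
            hab hac had hbc hbd hcd
        have hP : ({x, y, a, b, c, d} : Finset V) ⊆ S := by
          intro p' hp'
          simp only [Finset.mem_insert, Finset.mem_singleton] at hp'
          rcases hp' with rfl | rfl | rfl | rfl | rfl | rfl <;> assumption
        have hPcard : ({x, y, a, b, c, d} : Finset V).card = 6 := by
          rw [Finset.card_insert_of_notMem
              (by simp [Ne.symm hyx, Ne.symm hax, Ne.symm hbx, Ne.symm hcx, Ne.symm hdx]),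
            Finset.card_insert_of_notMem
              (by simp [Ne.symm hay, Ne.symm hby, Ne.symm hcy, Ne.symm hdy]),
            Finset.card_insert_of_notMem (by simp [hab, hac, had]),
            Finset.card_insert_of_notMem (by simp [hbc, hbd]), Finset.card_pair hcd]
        have hb3 := romanBondage_le_general G hn4 hγ {s(x, y), s(p, q), s(r, t)}
          {x, y, a, b, c, d}
          (by intro e he
              simp only [Finset.coe_insert, Set.mem_insert_iff, Finset.coe_singleton,
                Set.mem_singleton_iff] at he
              rcases he with rfl | rfl | rfl
              · exact hxy
              · exact hpq
              · exact hrt)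
          hP
          (fun p' hp' => by
            have hz : p' = x ∨ p' = y ∨ p' = a ∨ p' = b ∨ p' = c ∨ p' = d := by
              simpa [Finset.mem_insert, Finset.mem_singleton] using hp'
            rcases hz with rfl | rfl | hz
            · exact ⟨y, hxy, by simp⟩
            · exact ⟨x, hxy.symm, by rw [Sym2.eq_swap]; simp⟩
            · exact inc_of_pairs hpq hrt (hcover p' hz) _ (by simp) (by simp))
        rw [← hS] at hb3
        have hcards : (S \ ({x, y, a, b, c, d} : Finset V)).card = S.card - 6 := by
          rw [Finset.card_sdiff_of_subset hP, hPcard]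
        have hE0card : ({s(x, y), s(p, q), s(r, t)} : Finset (Sym2 V)).card ≤ 3 :=
          Finset.card_le_three
        omega

lemma exists_adj_of_connected (G : SimpleGraph V) (hconn : G.Connected)
    (hcard : 2 ≤ Fintype.card V) (v : V) : ∃ u, G.Adj v u := by
  obtain ⟨w, hw⟩ := Fintype.exists_ne_of_one_lt_card (by omega) v
  obtain ⟨p⟩ := hconn.preconnected v w
  cases p with
  | nil => exact absurd rfl hw.symm
  | cons h _ => exact ⟨_, h⟩

lemma all_deg_two (G : SimpleGraph V) (hconn : G.Connected) (hcard : Fintype.card V = 4)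
    (hγ : romanDom G = 3) (hb : romanBondage G = 2) : ∀ v, deg G v = 2 := by
  classical
  have hn4 : 4 ≤ Fintype.card V := le_of_eq hcard.symm
  have hΔ : ∀ v, deg G v ≤ 2 := fun v => by
    have := deg_le_sub_two_of_romanDom_eq_three G hn4 hγ v
    omega
  by_contra hc
  push_neg at hc
  obtain ⟨w, hw⟩ := hc
  have hw1 : deg G w ≤ 1 := by have := hΔ w; omega
  set S := bigDegSet G with hS
  have hmemS : ∀ v, v ∈ S ↔ deg G v = 2 := fun v => by rw [hS, mem_bigDegSet, hcard]
  have hwS : w ∉ S := fun h => hw ((hmemS w).mp h)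
  have hcov2 : ∀ x y : V, G.Adj x y → (∀ v ∈ S, v = x ∨ v = y) → False := by
    -- a single covering edge contradicts romanBondage = 2
    intro x y hxy hcov
    have hle := romanBondage_le G hn4 hγ {s(x, y)}
      (by intro e he
          simp only [Finset.coe_singleton, Set.mem_singleton_iff] at he
          rw [he, mem_edgeSet]; exact hxy)
      (by intro v hv
          have hvS : v ∈ S := (hmemS v).mpr (by omega)
          rcases hcov v hvS with rfl | rfl
          · exact ⟨y, hxy, Finset.mem_singleton_self _⟩
          · exact ⟨x, hxy.symm, by rw [Sym2.eq_swap]; exact Finset.mem_singleton_self _⟩)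
    rw [Finset.card_singleton] at hle
    omega
  have hScard : S.card ≤ 3 := by
    have hsub : S ⊆ univ.erase w :=
      fun v hv => Finset.mem_erase.mpr ⟨fun h => hwS (h ▸ hv), mem_univ v⟩
    have := Finset.card_le_card hsub
    rw [Finset.card_erase_of_mem (mem_univ w), Finset.card_univ, hcard] at this
    omega
  have hSne : S.Nonempty := by
    obtain ⟨v, hv⟩ := exists_bigDeg_of_romanDom_le_three G hn4 (le_of_eq hγ)
    exact ⟨v, (hmemS v).mpr (by have := hΔ v; rw [hcard] at hv; omega)⟩
  rcases eq_or_lt_of_le hScard with h3 | hlt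
  · -- |S| = 3 : parity contradiction
    have hwdeg1 : deg G w = 1 := by
      obtain ⟨u, hu⟩ := exists_adj_of_connected G hconn (by omega) w
      have hpos : 0 < G.degree w := G.degree_pos_iff_exists_adj w |>.mpr ⟨u, hu⟩
      rw [deg_eq_degree]
      rw [deg_eq_degree] at hw1
      omega
    have huniv : (univ : Finset V) = insert w S := by
      symm
      apply Finset.eq_univ_of_card
      rw [Finset.card_insert_of_notMem hwS]
      omega
    have hsum := G.sum_degrees_eq_twice_card_edges
    rw [huniv, Finset.sum_insert hwS] at hsum
    have hSsum : ∑ v ∈ S, G.degree v = 6 := by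
      have h2 : ∀ v ∈ S, G.degree v = 2 :=
        fun v hv => (deg_eq_degree G v).symm.trans ((hmemS v).mp hv)
      rw [Finset.sum_congr rfl h2, Finset.sum_const, h3, smul_eq_mul]
    rw [deg_eq_degree] at hwdeg1
    omega
  · -- |S| ≤ 2
    rcases Nat.lt_or_ge S.card 2 with h1 | h2
    · -- |S| = 1
      obtain ⟨x, hx⟩ := hSne
      have hxdeg : deg G x = 2 := (hmemS x).mp hx
      have hne : (G.neighborSet x).Nonempty :=
        Set.nonempty_of_ncard_ne_zero (by rw [deg] at hxdeg; omega)
      obtain ⟨u, hu⟩ := hne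
      refine hcov2 x u hu (fun v hv => Or.inl ?_)
      by_contra hvx
      have : 2 ≤ S.card := Finset.one_lt_card.mpr ⟨v, hv, x, hx, hvx⟩
      omega
    · -- |S| = 2
      have h2' : S.card = 2 := by omega
      obtain ⟨x, y, hxyne, hSxy⟩ := Finset.card_eq_two.mp h2'
      have hxS : x ∈ S := by rw [hSxy]; simp
      have hyS : y ∈ S := by rw [hSxy]; simp
      have hxdeg : deg G x = 2 := (hmemS x).mp hxS
      have hydeg : deg G y = 2 := (hmemS y).mp hyS
      have hxy : G.Adj x y := by
        by_contra hnxy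
        obtain ⟨z, hz⟩ : ∃ z : V, z ≠ x ∧ z ≠ y := by
          by_contra hcz
          push_neg at hcz
          have hsub : (univ : Finset V) ⊆ {x, y} := by
            intro v _
            by_cases hvx : v = x
            · simp [hvx]
            · simp [hcz v hvx]
          have := Finset.card_le_card hsub
          have h2c : ({x, y} : Finset V).card = 2 := Finset.card_pair hxyne
          rw [Finset.card_univ, hcard] at this
          omega
        obtain ⟨hzx, hzy⟩ := hz
        have hUx : uniqNonAdj G x :=
          uniqNonAdj_of_deg G (by rw [hcard]; exact hxdeg) hn4
        have hUy : uniqNonAdj G y :=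
          uniqNonAdj_of_deg G (by rw [hcard]; exact hydeg) hn4
        have hxz : G.Adj x z := by
          by_contra hnxz
          exact hzy (hUx z y hzx (Ne.symm hxyne) hnxz hnxy)
        have hyz : G.Adj y z := by
          by_contra hnyz
          exact hzx (hUy z x hzy hxyne hnyz (fun h => hnxy h.symm))
        have hzdeg : 2 ≤ deg G z := by
          have hsub : ({x, y} : Set V) ⊆ G.neighborSet z := by
            intro v hv
            rcases hv with rfl | hv
            · exact hxz.symm
            · rw [Set.mem_singleton_iff] at hv
              subst hv
              exact hyz.symm
          have := Set.ncard_le_ncard hsub (Set.toFinite _)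
          rw [Set.ncard_pair hxyne] at this
          exact this
        have hzS : z ∈ S := (hmemS z).mpr (by have := hΔ z; omega)
        rw [hSxy] at hzS
        simp only [Finset.mem_insert, Finset.mem_singleton] at hzS
        rcases hzS with h | h
        · exact hzx h
        · exact hzy h
      refine hcov2 x y hxy (fun v hv => ?_)
      rw [hSxy] at hv
      simpa using hv

lemma c4_structure (G : SimpleGraph V) (hcard : Fintype.card V = 4)
    (hdeg : ∀ v, deg G v = 2) :
    ∃ v0 a c b : V, v0 ≠ a ∧ v0 ≠ b ∧ v0 ≠ c ∧ a ≠ b ∧ a ≠ c ∧ b ≠ c ∧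
      G.Adj v0 a ∧ G.Adj v0 b ∧ G.Adj c a ∧ G.Adj c b ∧ ¬G.Adj v0 c ∧ ¬G.Adj a b ∧
      (∀ z : V, z = v0 ∨ z = a ∨ z = b ∨ z = c) := by
  classical
  have hne : Nonempty V := Fintype.card_pos_iff.mp (by omega)
  obtain ⟨v0⟩ := hne
  obtain ⟨a, b, hab, hN⟩ := Set.ncard_eq_two.mp (hdeg v0)
  have hv0a : G.Adj v0 a := by rw [← mem_neighborSet, hN]; simp
  have hv0b : G.Adj v0 b := by rw [← mem_neighborSet, hN]; simp
  obtain ⟨c, hc⟩ : ∃ c : V, c ∉ ({v0, a, b} : Finset V) := by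
    by_contra hcc
    push_neg at hcc
    have hsub : (univ : Finset V) ⊆ {v0, a, b} := fun z _ => hcc z
    have := Finset.card_le_card hsub
    have h3 : ({v0, a, b} : Finset V).card ≤ 3 :=
      Finset.card_le_three
    rw [Finset.card_univ, hcard] at this
    omega
  simp only [Finset.mem_insert, Finset.mem_singleton, not_or] at hc
  obtain ⟨hcv0, hca, hcb⟩ := hc
  have hv0c : ¬G.Adj v0 c := by
    intro h
    have : c ∈ G.neighborSet v0 := h
    rw [hN] at this
    rcases this with h' | h'
    · exact hca h'
    · exact hcb h'
  have hv0a' : v0 ≠ a := G.ne_of_adj hv0a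
  have hv0b' : v0 ≠ b := G.ne_of_adj hv0b
  have huniv : ∀ z : V, z = v0 ∨ z = a ∨ z = b ∨ z = c := by
    have hu : (univ : Finset V) = {v0, a, b, c} := by
      symm
      apply Finset.eq_univ_of_card
      rw [Finset.card_insert_of_notMem (by simp [hv0a', hv0b', Ne.symm hcv0]),
        Finset.card_insert_of_notMem (by simp [hab, Ne.symm hca]),
        Finset.card_pair (fun h => hcb h.symm), hcard]
    intro z
    have hz : z ∈ ({v0, a, b, c} : Finset V) := hu ▸ mem_univ z
    simpa using hz
  have hNc : G.neighborSet c = {a, b} := by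
    apply Set.eq_of_subset_of_ncard_le
    · intro u hu
      have huc : G.Adj c u := hu
      have huv0 : u ≠ v0 := fun h => hv0c (h ▸ huc).symm
      rcases huniv u with h | h | h | h
      · exact absurd h huv0
      · simp [h]
      · simp [h]
      · exact absurd h (fun h' => (G.irrefl (h' ▸ huc)))
    · rw [Set.ncard_pair hab]
      exact le_of_eq (hdeg c).symm
    · exact Set.toFinite _
  have hca' : G.Adj c a := by rw [← mem_neighborSet, hNc]; simp
  have hcb' : G.Adj c b := by rw [← mem_neighborSet, hNc]; simp
  have hnab : ¬G.Adj a b := by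
    intro h
    have hsub : ({v0, c} : Set V) ⊆ G.neighborSet a := by
      intro u hu
      rcases hu with rfl | hu
      · exact hv0a.symm
      · rw [Set.mem_singleton_iff] at hu
        subst hu
        exact hca'.symm
    have heq : G.neighborSet a = {v0, c} :=
      (Set.eq_of_subset_of_ncard_le hsub
        (by rw [Set.ncard_pair (Ne.symm hcv0)]; exact le_of_eq (hdeg a)) (Set.toFinite _)).symm
    have : b ∈ ({v0, c} : Set V) := heq ▸ ((G.mem_neighborSet a b).mpr h)
    rcases this with h' | h'
    · exact hv0b' h'.symm
    · rw [Set.mem_singleton_iff] at h'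
      exact hcb h'.symm
  exact ⟨v0, a, c, b, hv0a', hv0b', fun h => hcv0 h.symm, hab, fun h => hca h.symm,
    fun h => hcb h.symm, hv0a, hv0b, hca', hcb', hv0c, hnab, huniv⟩

lemma iso_c4 (G : SimpleGraph V) (hcard : Fintype.card V = 4) (hdeg : ∀ v, deg G v = 2) :
    Nonempty (G ≃g cycleGraph 4) := by
  classical
  obtain ⟨v0, a, c, b, h01, h03, h02, h13, h12, h23,
    hA01, hA03, hA21, hA23, hN02, hN13, huniv⟩ := c4_structure G hcard hdeg
  have hinj : Function.Injective (![v0, a, c, b] : Fin 4 → V) := by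
    intro i j hij
    fin_cases i <;> fin_cases j <;> simp_all
  have hbij : Function.Bijective (![v0, a, c, b] : Fin 4 → V) :=
    (Fintype.bijective_iff_injective_and_card _).mpr ⟨hinj, by simp [hcard]⟩
  have hmap : ∀ i j : Fin 4,
      G.Adj (![v0, a, c, b] i) (![v0, a, c, b] j) ↔ (cycleGraph 4).Adj i j := by
    intro i j
    fin_cases i <;> fin_cases j
    · exact iff_of_false (G.irrefl) (by decide)
    · exact iff_of_true hA01 (by decide)
    · exact iff_of_false hN02 (by decide)
    · exact iff_of_true hA03 (by decide)
    · exact iff_of_true hA01.symm (by decide)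
    · exact iff_of_false (G.irrefl) (by decide)
    · exact iff_of_true hA21.symm (by decide)
    · exact iff_of_false hN13 (by decide)
    · exact iff_of_false (fun h => hN02 h.symm) (by decide)
    · exact iff_of_true hA21 (by decide)
    · exact iff_of_false (G.irrefl) (by decide)
    · exact iff_of_true hA23 (by decide)
    · exact iff_of_true hA03.symm (by decide)
    · exact iff_of_false (fun h => hN13 h.symm) (by decide)
    · exact iff_of_true hA23.symm (by decide)
    · exact iff_of_false (G.irrefl) (by decide)
  have e0 : (cycleGraph 4) ≃g G := RelIso.mk (Equiv.ofBijective _ hbij) (hmap _ _)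
  exact ⟨e0.symm⟩

lemma deg_map_iso {W : Type*} {G : SimpleGraph V} {G' : SimpleGraph W} (e : G ≃g G')
    (v : V) : deg G v = deg G' (e v) := by
  unfold deg
  rw [← Nat.card_coe_set_eq, ← Nat.card_coe_set_eq]
  exact Nat.card_congr (e.mapNeighborSet v)

lemma deg_cycleGraph4 (w : Fin 4) : deg (cycleGraph 4) w = 2 := by
  rw [deg_eq_degree]
  exact cycleGraph_degree_three_le (n := 1)

lemma maxDeg_eq_two (G : SimpleGraph V) (hne : Nonempty V) (hdeg : ∀ v, deg G v = 2) :
    maxDeg G = 2 := by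
  have hset : {d | ∃ v, deg G v = d} = {2} := by
    ext d
    simp only [Set.mem_setOf_eq, Set.mem_singleton_iff]
    constructor
    · rintro ⟨v, rfl⟩
      exact hdeg v
    · rintro rfl
      exact ⟨hne.some, hdeg _⟩
  rw [maxDeg, hset, csSup_singleton]

lemma romanBondage_eq_two (G : SimpleGraph V) (hcard : Fintype.card V = 4)
    (hγ : romanDom G = 3) (hdeg : ∀ v, deg G v = 2) : romanBondage G = 2 := by
  classical
  have hn4 : 4 ≤ Fintype.card V := le_of_eq hcard.symm
  obtain ⟨v0, a, c, b, h01, h03, h02, h13, h12, h23,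
    hA01, hA03, hA21, hA23, hN02, hN13, huniv⟩ := c4_structure G hcard hdeg
  set B0 : Finset (Sym2 V) := {s(v0, a), s(c, b)} with hB0
  have hedges : ↑B0 ⊆ G.edgeSet := by
    intro e he
    simp only [hB0, Finset.coe_insert, Set.mem_insert_iff, Finset.coe_singleton,
      Set.mem_singleton_iff] at he
    rcases he with rfl | rfl
    · exact hA01
    · exact hA23
  have hcov : ∀ v, deg G v = Fintype.card V - 2 → ∃ u, G.Adj v u ∧ s(v, u) ∈ B0 := by
    intro v _
    rcases huniv v with rfl | rfl | rfl | rfl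
    · exact ⟨a, hA01, by simp [hB0]⟩
    · exact ⟨v0, hA01.symm, by rw [Sym2.eq_swap]; simp [hB0]⟩
    · exact ⟨c, hA23.symm, by rw [Sym2.eq_swap]; simp [hB0]⟩
    · exact ⟨b, hA23, by simp [hB0]⟩
  have hle : romanBondage G ≤ 2 := by
    have h := romanBondage_le G hn4 hγ B0 hedges hcov
    have hc2 : B0.card ≤ 2 := le_trans (Finset.card_insert_le _ _) (by simp [hB0])
    omega
  have hsetne : {k | ∃ B : Set (Sym2 V), B ⊆ G.edgeSet ∧
      romanDom (G.deleteEdges B) > romanDom G ∧ B.ncard = k}.Nonempty := by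
    refine ⟨B0.card, ↑B0, hedges, ?_, Set.ncard_coe_finset _⟩
    rw [hγ]
    exact romanDom_deleteEdges_gt G hn4 hγ ↑B0 (by simpa using hcov)
  obtain ⟨B, hBE, hBgt, hBcard⟩ : ∃ B : Set (Sym2 V), B ⊆ G.edgeSet ∧
      romanDom (G.deleteEdges B) > romanDom G ∧ B.ncard = romanBondage G :=
    Nat.sInf_mem hsetne
  have hgt3 : 3 < romanDom (G.deleteEdges B) := by rw [hγ] at hBgt; exact hBgt
  have hc := fun (v : V) (hv : deg G v = Fintype.card V - 2) =>
    cover_of_romanDom_deleteEdges_gt G hn4 B hgt3 hv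
  have hd2 : ∀ v : V, deg G v = Fintype.card V - 2 := fun v => by rw [hcard]; exact hdeg v
  by_contra hne2
  have hle1 : romanBondage G ≤ 1 := by omega
  rcases Nat.lt_or_ge (romanBondage G) 1 with h0 | h1
  · -- bondage = 0 : B empty
    have hB0' : B = ∅ := (Set.ncard_eq_zero (Set.toFinite B)).mp (by omega)
    obtain ⟨u, _, hu⟩ := hc v0 (hd2 v0)
    rw [hB0'] at hu
    exact absurd hu (Set.notMem_empty _)
  · -- bondage = 1 : B a single edge
    have hBone : B.ncard = 1 := by omega
    obtain ⟨e, rfl⟩ := Set.ncard_eq_one.mp hBone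
    obtain ⟨u1, _, hu1⟩ := hc v0 (hd2 v0)
    obtain ⟨u2, _, hu2⟩ := hc a (hd2 a)
    obtain ⟨u3, _, hu3⟩ := hc c (hd2 c)
    rw [Set.mem_singleton_iff] at hu1 hu2 hu3
    have ha' : a = v0 ∨ a = u1 := by
      have : a ∈ s(v0, u1) := by rw [hu1, ← hu2]; exact Sym2.mem_mk_left a u2
      simpa [Sym2.mem_iff] using this
    have hc' : c = v0 ∨ c = u1 := by
      have : c ∈ s(v0, u1) := by rw [hu1, ← hu3]; exact Sym2.mem_mk_left c u3
      simpa [Sym2.mem_iff] using this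
    rcases ha' with h | h
    · exact h01 h.symm
    · rcases hc' with h' | h'
      · exact h02 h'.symm
      · exact h12 (h.trans h'.symm)


end AuxRB

theorem stmt19 {V : Type*} [Fintype V] (G : SimpleGraph V)
    (hconn : G.Connected) (hn : 4 ≤ Fintype.card V)
    (hγ : romanDom G = 3) :
    (romanBondage G = maxDeg G ∧ maxDeg G = Fintype.card V - 2) ↔
      Nonempty (G ≃g SimpleGraph.cycleGraph 4) := by
  classical
  constructor
  · rintro ⟨hb, hmd⟩
    have hcard4 : Fintype.card V = 4 := by
      by_contra hne4
      have hn5 : 5 ≤ Fintype.card V := by omega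
      have hle := romanBondage_le_card_sub_three G hn5 hγ
      rw [hb, hmd] at hle
      omega
    have hb2 : romanBondage G = 2 := by
      rw [hb, hmd, hcard4]
    exact iso_c4 G hcard4 (all_deg_two G hconn hcard4 hγ hb2)
  · rintro ⟨e⟩
    have hcard4 : Fintype.card V = 4 := by
      rw [Fintype.card_congr e.toEquiv]
      simp
    have hdeg : ∀ v, deg G v = 2 := by
      intro v
      rw [deg_map_iso e v]
      exact deg_cycleGraph4 (e v)
    have hne : Nonempty V := Fintype.card_pos_iff.mp (by omega)
    have hmd : maxDeg G = 2 := maxDeg_eq_two G hne hdeg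
    have hbond := romanBondage_eq_two G hcard4 hγ hdeg
    refine ⟨by rw [hbond, hmd], by rw [hmd, hcard4]⟩
end
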